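/- arXiv:2110.03203 — 7 statements merged into one kernel-verified Lean document; each statement's English description precedes it below -/
import Mathlib

section
/- For a ∈ (0,1), the improper integral ∫₀^∞ t^{a−1} cos t dt converges and equals Γ(a) cos(πa/2). -/
open Real Filter

section AuxStmt2
open MeasureTheory Set
variable {a : ℝ} (ha0 : 0 < a) (ha1 : a < 1)

lemma gamma_repr (ha : a < 1) {t : ℝ} (ht : 0 < t) :
    ∫ x in Ioi (0:ℝ), x ^ (-a) * Real.exp (-(t*x)) = Real.Gamma (1-a) * t ^ (a-1) := by
  have h := Real.integral_rpow_mul_exp_neg_mul_Ioi (a := 1-a) (r := t) (by linarith) ht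
  rw [show (1-a)-1 = -a by ring] at h
  rw [h, one_div, ← Real.rpow_neg_one, ← Real.rpow_mul ht.le, mul_comm]
  norm_num

lemma integ_rpow_exp (ha : a < 1) {t : ℝ} (ht : 0 < t) :
    IntegrableOn (fun x : ℝ => x ^ (-a) * Real.exp (-(t*x))) (Ioi (0:ℝ)) := by
  have h := integrableOn_rpow_mul_exp_neg_mul_rpow (p := 1) (s := -a) (b := t)
    (by linarith) one_pos ht
  refine h.congr_fun (fun x hx => ?_) measurableSet_Ioi
  dsimp only; rw [Real.rpow_one, neg_mul]

lemma rpow_integrableOn_Ioc (ha0 : 0 < a) {T : ℝ} (hT : 0 ≤ T) :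
    IntegrableOn (fun t : ℝ => t ^ (a-1)) (Ioc (0:ℝ) T) := by
  have := intervalIntegral.intervalIntegrable_rpow' (a := 0) (b := T)
    (r := a - 1) (by linarith)
  rwa [intervalIntegrable_iff_integrableOn_Ioc_of_le hT] at this

include ha0 ha1 in
lemma fub1 {T : ℝ} (hT : 0 < T) :
    Integrable (Function.uncurry fun t x : ℝ => Real.cos t * (x ^ (-a) * Real.exp (-(t*x))))
      ((volume.restrict (Ioc (0:ℝ) T)).prod (volume.restrict (Ioi (0:ℝ)))) := by
  have hmeas : AEStronglyMeasurable (Function.uncurry fun t x : ℝ =>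
      Real.cos t * (x ^ (-a) * Real.exp (-(t*x))))
      ((volume.restrict (Ioc (0:ℝ) T)).prod (volume.restrict (Ioi (0:ℝ)))) := by
    apply Measurable.aestronglyMeasurable
    unfold Function.uncurry
    fun_prop
  refine (integrable_prod_iff hmeas).mpr ⟨?_, ?_⟩ <;> simp only [Function.uncurry_apply_pair]
  · rw [ae_restrict_iff' measurableSet_Ioc]
    filter_upwards with t ht
    exact ((integ_rpow_exp ha1 ht.1).const_mul _)
  · have hint : IntegrableOn (fun t : ℝ => Real.Gamma (1-a) * t ^ (a-1)) (Ioc (0:ℝ) T) :=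
      (rpow_integrableOn_Ioc ha0 hT.le).const_mul _
    refine Integrable.mono' hint (hmeas.norm.integral_prod_right') ?_
    rw [ae_restrict_iff' measurableSet_Ioc]
    filter_upwards with t ht
    have h1 : ∫ x in Ioi (0:ℝ), ‖Real.cos t * (x ^ (-a) * Real.exp (-(t*x)))‖
        = |Real.cos t| * (Real.Gamma (1-a) * t ^ (a-1)) := by
      rw [← gamma_repr ha1 ht.1, ← integral_const_mul]
      refine setIntegral_congr_fun measurableSet_Ioi (fun x hx => ?_)
      rw [norm_mul, norm_mul, Real.norm_eq_abs, Real.norm_eq_abs, Real.norm_eq_abs,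
        abs_of_nonneg (Real.rpow_nonneg (le_of_lt hx) _), abs_of_nonneg (Real.exp_nonneg _)]
    have hg : 0 ≤ Real.Gamma (1-a) * t ^ (a-1) := by
      exact mul_nonneg (Real.Gamma_pos_of_pos (show 0 < 1 - a by linarith)).le
        (Real.rpow_nonneg ht.1.le _)
    calc ‖∫ x in Ioi (0:ℝ), ‖Real.cos t * (x ^ (-a) * Real.exp (-(t*x)))‖‖
        = |Real.cos t| * (Real.Gamma (1-a) * t ^ (a-1)) := by
          rw [Real.norm_eq_abs, h1, abs_of_nonneg (by positivity)]
      _ ≤ 1 * (Real.Gamma (1-a) * t ^ (a-1)) :=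
          mul_le_mul_of_nonneg_right (Real.abs_cos_le_one t) hg
      _ = _ := one_mul _

lemma aux_deriv (x : ℝ) (t : ℝ) :
    HasDerivAt (fun t : ℝ => Real.exp (-(x*t)) * (Real.sin t - x * Real.cos t))
      ((1 + x^2) * (Real.exp (-(x*t)) * Real.cos t)) t := by
  have h1 : HasDerivAt (fun t : ℝ => Real.exp (-(x*t))) (-x * Real.exp (-(x*t))) t := by
    have := (Real.hasDerivAt_exp (-(x*t))).comp t (((hasDerivAt_id t).const_mul x).neg)
    exact this.congr_deriv (by ring)
  have h2 : HasDerivAt (fun t : ℝ => Real.sin t - x * Real.cos t)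
      (Real.cos t + x * Real.sin t) t := by
    have := (Real.hasDerivAt_sin t).sub ((Real.hasDerivAt_cos t).const_mul x)
    exact this.congr_deriv (by ring)
  have := h1.mul h2
  exact this.congr_deriv (by ring)

lemma aux_interval (x : ℝ) (hx : 0 < x) (T : ℝ) :
    ∫ t in (0:ℝ)..T, Real.exp (-(x*t)) * Real.cos t
      = (Real.exp (-(x*T)) * (Real.sin T - x * Real.cos T) + x) / (1 + x^2) := by
  have h := intervalIntegral.integral_eq_sub_of_hasDerivAt
    (f := fun t : ℝ => Real.exp (-(x*t)) * (Real.sin t - x * Real.cos t) / (1 + x^2))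
    (f' := fun t : ℝ => Real.exp (-(x*t)) * Real.cos t) (a := 0) (b := T)
    (fun t _ => by
      have := (aux_deriv x t).div_const (1 + x^2)
      exact this.congr_deriv (by field_simp))
    (by
      apply Continuous.intervalIntegrable
      fun_prop)
  rw [h]
  simp [mul_comm]
  ring

include ha0 ha1 in
lemma repr2 {T : ℝ} (hT : 0 < T) :
    Real.Gamma (1-a) * ∫ t in (0:ℝ)..T, t ^ (a - 1) * Real.cos t
    = ∫ x in Ioi (0:ℝ),
        x ^ (-a) * ((Real.exp (-(x*T)) * (Real.sin T - x * Real.cos T) + x) / (1 + x^2)) := by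
  rw [intervalIntegral.integral_of_le hT.le, ← integral_const_mul]
  have step1 : ∫ t in Ioc (0:ℝ) T, Real.Gamma (1-a) * (t ^ (a-1) * Real.cos t)
      = ∫ t in Ioc (0:ℝ) T, ∫ x in Ioi (0:ℝ),
          Real.cos t * (x ^ (-a) * Real.exp (-(t*x))) := by
    refine setIntegral_congr_fun measurableSet_Ioc (fun t ht => ?_)
    rw [integral_const_mul, gamma_repr ha1 ht.1]
    ring
  rw [step1, integral_integral_swap (fub1 ha0 ha1 hT)]
  refine setIntegral_congr_fun measurableSet_Ioi (fun x hx => ?_)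
  rw [← aux_interval x hx T, intervalIntegral.integral_of_le hT.le, ← integral_const_mul]
  refine setIntegral_congr_fun measurableSet_Ioc (fun t ht => ?_)
  rw [mul_comm x t]
  ring

include ha0 ha1 in
lemma bound_integrable :
    IntegrableOn (fun x : ℝ => x ^ (-a) * ((1 + 2*x)/(1 + x^2))) (Ioi (0:ℝ)) := by
  have hmeas : AEStronglyMeasurable (fun x : ℝ => x ^ (-a) * ((1 + 2*x)/(1 + x^2)))
      (volume.restrict (Ioi (0:ℝ))) := by
    apply Measurable.aestronglyMeasurable; fun_prop
  rw [show Ioi (0:ℝ) = Ioc (0:ℝ) 1 ∪ Ioi 1 from (Ioc_union_Ioi_eq_Ioi zero_le_one).symm]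
  refine IntegrableOn.union ?_ ?_
  · have hint : IntegrableOn (fun x : ℝ => 3 * x ^ (-a)) (Ioc (0:ℝ) 1) := by
      refine Integrable.const_mul ?_ 3
      have := intervalIntegral.intervalIntegrable_rpow' (a := 0) (b := 1)
        (r := -a) (by linarith)
      rwa [intervalIntegrable_iff_integrableOn_Ioc_of_le zero_le_one] at this
    refine Integrable.mono' hint (hmeas.mono_set Ioc_subset_Ioi_self) ?_
    rw [ae_restrict_iff' measurableSet_Ioc]
    filter_upwards with x hx
    have hx0 : (0:ℝ) < x := hx.1
    have h1 : (0:ℝ) < 1 + x^2 := by positivity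
    rw [Real.norm_eq_abs, abs_of_nonneg (by positivity)]
    rw [mul_comm (3:ℝ) _]
    refine mul_le_mul_of_nonneg_left ?_ (Real.rpow_nonneg hx0.le _)
    rw [div_le_iff₀ h1]
    nlinarith [hx.2, sq_nonneg x]
  · have hint : IntegrableOn (fun x : ℝ => 3 * x ^ (-a-1)) (Ioi (1:ℝ)) :=
      (integrableOn_Ioi_rpow_of_lt (by linarith) one_pos).const_mul 3
    refine Integrable.mono' hint (hmeas.mono_set (Ioi_subset_Ioi zero_le_one)) ?_
    rw [ae_restrict_iff' measurableSet_Ioi]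
    filter_upwards with x hx
    have hx1 : (1:ℝ) ≤ x := le_of_lt hx
    have hx0 : (0:ℝ) < x := lt_of_lt_of_le one_pos hx1
    have h1 : (0:ℝ) < 1 + x^2 := by positivity
    rw [Real.norm_eq_abs, abs_of_nonneg (by positivity)]
    have hpow : x ^ (-a-1) = x ^ (-a) / x := by
      rw [show -a-1 = -a - 1 from rfl, Real.rpow_sub hx0, Real.rpow_one]
    rw [hpow]
    have h3 : (1 + 2*x)/(1 + x^2) ≤ 3 / x := by
      rw [div_le_div_iff₀ h1 hx0]; nlinarith
    calc x ^ (-a) * ((1 + 2*x)/(1 + x^2)) ≤ x ^ (-a) * (3 / x) :=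
          mul_le_mul_of_nonneg_left h3 (Real.rpow_nonneg hx0.le _)
      _ = 3 * (x ^ (-a) / x) := by ring

include ha0 ha1 in
lemma limit1 :
    Tendsto (fun T : ℝ => ∫ x in Ioi (0:ℝ),
        x ^ (-a) * ((Real.exp (-(x*T)) * (Real.sin T - x * Real.cos T) + x) / (1 + x^2)))
      atTop (nhds (∫ x in Ioi (0:ℝ), x ^ (-a) * (x / (1 + x^2)))) := by
  refine tendsto_integral_filter_of_dominated_convergence
    (fun x : ℝ => x ^ (-a) * ((1 + 2*x)/(1 + x^2))) ?_ ?_ (bound_integrable ha0 ha1) ?_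
  · filter_upwards with T
    apply Measurable.aestronglyMeasurable; fun_prop
  · filter_upwards [eventually_ge_atTop (0:ℝ)] with T hT
    rw [ae_restrict_iff' measurableSet_Ioi]
    filter_upwards with x hx
    have hx0 : (0:ℝ) < x := hx
    have h1 : (0:ℝ) < 1 + x^2 := by positivity
    rw [Real.norm_eq_abs, abs_mul, abs_of_nonneg (Real.rpow_nonneg hx0.le _)]
    refine mul_le_mul_of_nonneg_left ?_ (Real.rpow_nonneg hx0.le _)
    rw [abs_div, abs_of_pos h1, div_le_div_iff_of_pos_right h1]
    have he : Real.exp (-(x*T)) ≤ 1 := by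
      rw [Real.exp_le_one_iff]
      simp [mul_nonneg hx0.le hT]
    have h2 : |Real.sin T - x * Real.cos T| ≤ 1 + x := by
      calc |Real.sin T - x * Real.cos T| ≤ |Real.sin T| + |x * Real.cos T| := abs_sub _ _
        _ ≤ 1 + x := by
            refine add_le_add (Real.abs_sin_le_one T) ?_
            rw [abs_mul, abs_of_pos hx0]
            calc x * |Real.cos T| ≤ x * 1 :=
                  mul_le_mul_of_nonneg_left (Real.abs_cos_le_one T) hx0.le
              _ = x := mul_one x
    calc |Real.exp (-(x*T)) * (Real.sin T - x * Real.cos T) + x|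
        ≤ |Real.exp (-(x*T)) * (Real.sin T - x * Real.cos T)| + |x| := abs_add_le _ _
      _ ≤ 1 * (1 + x) + x := by
          rw [abs_of_pos hx0, abs_mul, abs_of_pos (Real.exp_pos _)]
          exact add_le_add (mul_le_mul he h2 (abs_nonneg _) zero_le_one) le_rfl
      _ = 1 + 2*x := by ring
  · rw [ae_restrict_iff' measurableSet_Ioi]
    filter_upwards with x hx
    have hx0 : (0:ℝ) < x := hx
    have hexp : Tendsto (fun T : ℝ => Real.exp (-(x*T)) * (Real.sin T - x * Real.cos T))
        atTop (nhds 0) := by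
      apply squeeze_zero_norm (a := fun T : ℝ => (1 + x) * Real.exp (-(x*T)))
      · intro T
        rw [Real.norm_eq_abs, abs_mul, abs_of_pos (Real.exp_pos _), mul_comm]
        refine mul_le_mul_of_nonneg_right ?_ (Real.exp_pos _).le
        calc |Real.sin T - x * Real.cos T| ≤ |Real.sin T| + |x * Real.cos T| := abs_sub _ _
          _ ≤ 1 + x := by
              refine add_le_add (Real.abs_sin_le_one T) ?_
              rw [abs_mul, abs_of_pos hx0]
              calc x * |Real.cos T| ≤ x * 1 :=
                    mul_le_mul_of_nonneg_left (Real.abs_cos_le_one T) hx0.le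
                _ = x := mul_one x
      · have h1 : Tendsto (fun T : ℝ => -(x*T)) atTop atBot := by
          apply Filter.tendsto_neg_atTop_atBot.comp
          exact Tendsto.const_mul_atTop hx0 tendsto_id
        have := (Real.tendsto_exp_atBot.comp h1).const_mul (1 + x)
        simpa using this
    have : Tendsto (fun T : ℝ =>
        x ^ (-a) * ((Real.exp (-(x*T)) * (Real.sin T - x * Real.cos T) + x) / (1 + x^2)))
        atTop (nhds (x ^ (-a) * ((0 + x) / (1 + x^2)))) :=
      (((hexp.add tendsto_const_nhds).div_const _).const_mul _)
    simpa using this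

lemma exp_int {c : ℝ} (hc : 0 < c) :
    ∫ t in Ioi (0:ℝ), Real.exp (-(c*t)) = 1/c := by
  have h := Real.integral_rpow_mul_exp_neg_mul_Ioi (a := 1) (r := c) one_pos hc
  rw [sub_self] at h
  simpa [Real.rpow_zero, Real.rpow_one, Real.Gamma_one] using h

lemma gauss_int (ha1 : a < 1) {t : ℝ} (ht : 0 < t) :
    ∫ x in Ioi (0:ℝ), x ^ (1-a) * Real.exp (-(t * x^2))
      = t ^ ((a-2)/2) * ((1/2) * Real.Gamma ((2-a)/2)) := by
  have h := integral_rpow_mul_exp_neg_mul_rpow (p := 2) (q := 1-a) (b := t)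
    two_pos (by linarith) ht
  rw [show (1-a+1) = 2-a by ring, show -(2-a)/2 = (a-2)/2 by ring, mul_assoc] at h
  rw [← h]
  refine setIntegral_congr_fun measurableSet_Ioi (fun x hx => ?_)
  rw [neg_mul]
  norm_num [Real.rpow_natCast]


include ha0 ha1 in
lemma fub2 :
    Integrable (Function.uncurry fun x t : ℝ => x ^ (1-a) * Real.exp (-((1 + x^2)*t)))
      ((volume.restrict (Ioi (0:ℝ))).prod (volume.restrict (Ioi (0:ℝ)))) := by
  have hmeas : AEStronglyMeasurable (Function.uncurry fun x t : ℝ =>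
      x ^ (1-a) * Real.exp (-((1 + x^2)*t)))
      ((volume.restrict (Ioi (0:ℝ))).prod (volume.restrict (Ioi (0:ℝ)))) := by
    apply Measurable.aestronglyMeasurable
    unfold Function.uncurry
    fun_prop
  refine (integrable_prod_iff hmeas).mpr ⟨?_, ?_⟩ <;>
    simp only [Function.uncurry_apply_pair]
  · rw [ae_restrict_iff' measurableSet_Ioi]
    filter_upwards with x hx
    have hc : (0:ℝ) < 1 + x^2 := by positivity
    refine Integrable.const_mul ?_ _
    have := exp_neg_integrableOn_Ioi (0:ℝ) hc
    exact this.congr_fun (fun t ht => by dsimp only; rw [neg_mul]) measurableSet_Ioi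
  · refine Integrable.mono' (bound_integrable ha0 ha1) (hmeas.norm.integral_prod_right') ?_
    rw [ae_restrict_iff' measurableSet_Ioi]
    filter_upwards with x hx
    have hx0 : (0:ℝ) < x := hx
    have hc : (0:ℝ) < 1 + x^2 := by positivity
    have h1 : ∫ t in Ioi (0:ℝ), ‖x ^ (1-a) * Real.exp (-((1 + x^2)*t))‖
        = x ^ (1-a) * (1/(1 + x^2)) := by
      rw [← exp_int hc, ← integral_const_mul]
      refine setIntegral_congr_fun measurableSet_Ioi (fun t ht => ?_)
      rw [norm_mul, Real.norm_eq_abs, Real.norm_eq_abs,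
        abs_of_nonneg (Real.rpow_nonneg hx0.le _), abs_of_nonneg (Real.exp_nonneg _)]
    rw [Real.norm_eq_abs, h1, abs_of_nonneg (by positivity)]
    have hsplit : x ^ (1-a) = x ^ (-a) * x := by
      rw [show (1-a) = -a + 1 by ring, Real.rpow_add hx0, Real.rpow_one]
    rw [hsplit]
    have : x ^ (-a) * x * (1/(1 + x^2)) = x ^ (-a) * (x/(1 + x^2)) := by ring
    rw [this]
    refine mul_le_mul_of_nonneg_left ?_ (Real.rpow_nonneg hx0.le _)
    gcongr
    linarith

include ha0 ha1 in
lemma J_val :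
    ∫ x in Ioi (0:ℝ), x ^ (-a) * (x/(1 + x^2))
      = (1/2) * Real.Gamma ((2-a)/2) * Real.Gamma (a/2) := by
  have step1 : ∫ x in Ioi (0:ℝ), x ^ (-a) * (x/(1 + x^2))
      = ∫ x in Ioi (0:ℝ), ∫ t in Ioi (0:ℝ), x ^ (1-a) * Real.exp (-((1 + x^2)*t)) := by
    refine setIntegral_congr_fun measurableSet_Ioi (fun x hx => ?_)
    have hx0 : (0:ℝ) < x := hx
    have hc : (0:ℝ) < 1 + x^2 := by positivity
    rw [integral_const_mul, exp_int hc]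
    rw [show (1-a) = -a + 1 by ring, Real.rpow_add hx0, Real.rpow_one]
    ring
  rw [step1, integral_integral_swap (fub2 ha0 ha1)]
  have step2 : ∫ t in Ioi (0:ℝ), ∫ x in Ioi (0:ℝ), x ^ (1-a) * Real.exp (-((1 + x^2)*t))
      = ∫ t in Ioi (0:ℝ), ((1/2) * Real.Gamma ((2-a)/2)) * (Real.exp (-t) * t ^ (a/2 - 1)) := by
    refine setIntegral_congr_fun measurableSet_Ioi (fun t ht => ?_)
    have ht0 : (0:ℝ) < t := ht
    have inner : ∫ x in Ioi (0:ℝ), x ^ (1-a) * Real.exp (-((1 + x^2)*t))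
        = Real.exp (-t) * ∫ x in Ioi (0:ℝ), x ^ (1-a) * Real.exp (-(t * x^2)) := by
      rw [← integral_const_mul]
      refine setIntegral_congr_fun measurableSet_Ioi (fun x hx => ?_)
      rw [show -((1 + x^2)*t) = -t + -(t * x^2) by ring, Real.exp_add]
      ring
    rw [inner, gauss_int ha1 ht0, show (a-2)/2 = a/2 - 1 by ring]
    ring
  rw [step2, integral_const_mul, ← Real.Gamma_eq_integral (by linarith : 0 < a/2)]


lemma gamma_identity {a : ℝ} (ha0 : 0 < a) (ha1 : a < 1) :
    (1/2) * Real.Gamma ((2-a)/2) * Real.Gamma (a/2)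
      = Real.Gamma (1-a) * (Real.Gamma a * Real.cos (Real.pi * a / 2)) := by
  have hpi := Real.pi_pos
  have hs1 : 0 < Real.sin (Real.pi * (a/2)) :=
    Real.sin_pos_of_pos_of_lt_pi (by positivity) (by nlinarith)
  have hs2 : 0 < Real.sin (Real.pi * a) :=
    Real.sin_pos_of_pos_of_lt_pi (by positivity) (by nlinarith)
  have r1 : Real.Gamma (a/2) * Real.Gamma (1-a/2) = Real.pi / Real.sin (Real.pi * (a/2)) :=
    Real.Gamma_mul_Gamma_one_sub (a/2)
  have r2 : Real.Gamma a * Real.Gamma (1-a) = Real.pi / Real.sin (Real.pi * a) :=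
    Real.Gamma_mul_Gamma_one_sub a
  have hd : Real.sin (Real.pi * a) = 2 * Real.sin (Real.pi * (a/2)) * Real.cos (Real.pi * (a/2)) := by
    rw [show Real.pi * a = 2 * (Real.pi * (a/2)) by ring, Real.sin_two_mul]
  have h2a : (2-a)/2 = 1 - a/2 := by ring
  have hc : Real.pi * a / 2 = Real.pi * (a/2) := by ring
  have hcos : 0 < Real.cos (Real.pi * (a/2)) := by
    apply Real.cos_pos_of_mem_Ioo
    constructor
    · nlinarith
    · nlinarith
  rw [h2a, hc]
  calc (1/2) * Real.Gamma (1 - a/2) * Real.Gamma (a/2)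
      = (1/2) * (Real.Gamma (a/2) * Real.Gamma (1 - a/2)) := by ring
    _ = (1/2) * (Real.pi / Real.sin (Real.pi * (a/2))) := by rw [r1]
    _ = (Real.pi / Real.sin (Real.pi * a)) * Real.cos (Real.pi * (a/2)) := by
        have haux : ∀ p s c : ℝ, s ≠ 0 → c ≠ 0 → (1/2)*(p/s) = p/(2*s*c)*c := by
          intro p s c hs hc; field_simp
        rw [hd]
        exact haux _ _ _ hs1.ne' hcos.ne' 
    _ = Real.Gamma (1-a) * (Real.Gamma a * Real.cos (Real.pi * (a/2))) := by
        rw [← r2]; ring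
end AuxStmt2

open MeasureTheory Set in
theorem stmt_2 (a : ℝ) (ha : a ∈ Set.Ioo (0:ℝ) 1) :
    Filter.Tendsto (fun T : ℝ => ∫ t in (0:ℝ)..T, t ^ (a - 1) * Real.cos t)
      Filter.atTop (nhds (Real.Gamma a * Real.cos (Real.pi * a / 2))) := by
  obtain ⟨ha0, ha1⟩ := ha
  have hG : 0 < Real.Gamma (1-a) := Real.Gamma_pos_of_pos (by linarith)
  have hlim := (limit1 ha0 ha1).div_const (Real.Gamma (1-a))
  rw [J_val ha0 ha1, gamma_identity ha0 ha1] at hlim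
  have hval : Real.Gamma (1-a) * (Real.Gamma a * Real.cos (Real.pi * a / 2)) / Real.Gamma (1-a)
      = Real.Gamma a * Real.cos (Real.pi * a / 2) := by
    exact mul_div_cancel_left₀ _ hG.ne' 
  rw [hval] at hlim
  refine hlim.congr' ?_
  filter_upwards [eventually_gt_atTop (0:ℝ)] with T hT
  rw [← repr2 ha0 ha1 hT]
  exact mul_div_cancel_left₀ _ hG.ne'
end

section
/- For a ∈ (0,1), there exists C > 0 such that for all ω ≥ 1, |∫₀¹ x^{a−1} cos(ωx) dx − Γ(a) cos(πa/2)/ω^a − sin(ω)/ω| ≤ C/ω². -/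
open Real

open MeasureTheory Set Filter Topology in
private lemma stmt4_norm_f (b : ℝ) (z : ℂ) {t : ℝ} (ht : 0 < t) :
    ‖((t ^ b : ℝ) : ℂ) * Complex.exp (-(z * t))‖ = t ^ b * Real.exp (-(z.re * t)) := by
  rw [norm_mul, Complex.norm_real, Real.norm_eq_abs,
    abs_of_nonneg (Real.rpow_nonneg ht.le _), Complex.norm_exp]
  congr 1
  simp [Complex.neg_re, Complex.mul_re]

open MeasureTheory Set Filter Topology in
private lemma stmt4_cont (b : ℝ) (z : ℂ) :
    ContinuousOn (fun t : ℝ => ((t ^ b : ℝ) : ℂ) * Complex.exp (-(z * t))) (Ioi 0) := by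
  apply ContinuousOn.mul
  · exact Complex.continuous_ofReal.comp_continuousOn
      (continuousOn_id.rpow_const fun x hx => Or.inl (ne_of_gt hx))
  · exact (Complex.continuous_exp.comp
      ((continuous_const.mul Complex.continuous_ofReal).neg)).continuousOn

open MeasureTheory Set Filter Topology in
private lemma stmt4_int_Ioc (b : ℝ) (hb : -1 < b) (z : ℂ) (hz : 0 ≤ z.re) :
    IntegrableOn (fun t : ℝ => ((t ^ b : ℝ) : ℂ) * Complex.exp (-(z * t))) (Ioc 0 1) := by
  have hint : IntegrableOn (fun t : ℝ => t ^ b) (Ioc 0 1) := by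
    have := intervalIntegral.intervalIntegrable_rpow' (a := 0) (b := 1) hb
    rwa [intervalIntegrable_iff_integrableOn_Ioc_of_le zero_le_one] at this
  refine hint.integrable.mono ?_ ?_
  · exact ((stmt4_cont b z).mono Ioc_subset_Ioi_self).aestronglyMeasurable measurableSet_Ioc
  · filter_upwards [ae_restrict_mem measurableSet_Ioc] with t ht
    rw [stmt4_norm_f b z ht.1, Real.norm_eq_abs, abs_of_nonneg (Real.rpow_nonneg ht.1.le _)]
    nth_rewrite 2 [← mul_one (t ^ b)]
    gcongr
    · exact Real.rpow_nonneg ht.1.le _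
    exact Real.exp_le_one_iff.mpr (by nlinarith [ht.1.le])

open MeasureTheory Set Filter Topology in
private lemma stmt4_int_Ioi_eps (b : ℝ) (hb : b ≤ 0) (z : ℂ) (hz : 0 < z.re) :
    IntegrableOn (fun t : ℝ => ((t ^ b : ℝ) : ℂ) * Complex.exp (-(z * t))) (Ioi 1) := by
  have hint : IntegrableOn (fun t : ℝ => Real.exp (-(z.re * t))) (Ioi 1) := by
    simpa [neg_mul, mul_comm] using exp_neg_integrableOn_Ioi 1 hz
  refine hint.integrable.mono ?_ ?_
  · exact ((stmt4_cont b z).mono (Ioi_subset_Ioi zero_le_one)).aestronglyMeasurable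
      measurableSet_Ioi
  · filter_upwards [ae_restrict_mem measurableSet_Ioi] with t ht
    have ht0 : (0:ℝ) < t := lt_trans one_pos ht
    rw [stmt4_norm_f b z ht0, Real.norm_eq_abs, abs_of_nonneg (Real.exp_nonneg _)]
    nth_rewrite 2 [← one_mul (Real.exp _)]
    gcongr
    exact Real.rpow_le_one_of_one_le_of_nonpos (le_of_lt ht) hb

open MeasureTheory Set Filter Topology in
private lemma stmt4_int_Ioi_decay (b : ℝ) (hb : b < -1) (z : ℂ) (hz : 0 ≤ z.re) :
    IntegrableOn (fun t : ℝ => ((t ^ b : ℝ) : ℂ) * Complex.exp (-(z * t))) (Ioi 1) := by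
  have hint : IntegrableOn (fun t : ℝ => t ^ b) (Ioi 1) :=
    integrableOn_Ioi_rpow_of_lt hb one_pos
  refine hint.integrable.mono ?_ ?_
  · exact ((stmt4_cont b z).mono (Ioi_subset_Ioi zero_le_one)).aestronglyMeasurable
      measurableSet_Ioi
  · filter_upwards [ae_restrict_mem measurableSet_Ioi] with t ht
    have ht0 : (0:ℝ) < t := lt_trans one_pos ht
    rw [stmt4_norm_f b z ht0, Real.norm_eq_abs, abs_of_nonneg (Real.rpow_nonneg ht0.le _)]
    nth_rewrite 2 [← mul_one (t ^ b)]
    gcongr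
    exact Real.exp_le_one_iff.mpr (by nlinarith [ht0.le])

open MeasureTheory Set Filter Topology in
private lemma stmt4_int_Ioi0 (b : ℝ) (hb : -1 < b) (hb2 : b ≤ 0) (z : ℂ) (hz : 0 < z.re) :
    IntegrableOn (fun t : ℝ => ((t ^ b : ℝ) : ℂ) * Complex.exp (-(z * t))) (Ioi 0) := by
  rw [← Ioc_union_Ioi_eq_Ioi (zero_le_one (α := ℝ))]
  exact (stmt4_int_Ioc b hb z hz.le).union (stmt4_int_Ioi_eps b hb2 z hz)

open MeasureTheory Set Filter Topology in
private lemma stmt4_ibp (b : ℝ) (hb : b < 0) (z : ℂ) (hz : z ≠ 0) (hz' : 0 ≤ z.re)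
    (h1 : IntegrableOn (fun t : ℝ => ((t ^ b : ℝ) : ℂ) * Complex.exp (-(z * t))) (Ioi 1))
    (h2 : IntegrableOn (fun t : ℝ => ((t ^ (b - 1) : ℝ) : ℂ) * Complex.exp (-(z * t))) (Ioi 1)) :
    ∫ t : ℝ in Ioi 1, ((t ^ b : ℝ) : ℂ) * Complex.exp (-(z * t)) =
      Complex.exp (-z) / z +
        ((b : ℂ) / z) * ∫ t : ℝ in Ioi 1, ((t ^ (b - 1) : ℝ) : ℂ) * Complex.exp (-(z * t)) := by
  set F : ℝ → ℂ := fun t => ((t ^ b : ℝ) : ℂ) * Complex.exp (-(z * t)) * (-z)⁻¹ with hF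
  set F' : ℝ → ℂ := fun t =>
    (((b * t ^ (b - 1) : ℝ) : ℂ) * Complex.exp (-(z * t)) +
      ((t ^ b : ℝ) : ℂ) * (Complex.exp (-(z * t)) * -z)) * (-z)⁻¹ with hF'
  have hderiv : ∀ t ∈ Ici (1:ℝ), HasDerivAt F (F' t) t := by
    intro t ht
    have ht0 : (0:ℝ) < t := lt_of_lt_of_le one_pos ht
    have d1 : HasDerivAt (fun s : ℝ => ((s ^ b : ℝ) : ℂ)) ((b * t ^ (b - 1) : ℝ) : ℂ) t :=
      HasDerivAt.ofReal_comp (Real.hasDerivAt_rpow_const (Or.inl (ne_of_gt ht0)))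
    have d2 : HasDerivAt (fun s : ℝ => Complex.exp (-(z * s))) (Complex.exp (-(z * t)) * -z) t := by
      have dinner : HasDerivAt (fun s : ℝ => -(z * (s : ℂ))) (-z) t := by
        have h0 := ((Complex.ofRealCLM.hasDerivAt (x := t)).const_mul z).neg
        simp only [Complex.ofRealCLM_apply, Complex.ofReal_one, mul_one] at h0
        exact h0
      exact dinner.cexp
    exact (d1.mul d2).mul_const (-z)⁻¹
  have hFtop : Tendsto F atTop (𝓝 0) := by
    apply squeeze_zero_norm' (a := fun t : ℝ => t ^ b * ‖z‖⁻¹)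
    · filter_upwards [eventually_ge_atTop (1:ℝ)] with t ht
      have ht0 : (0:ℝ) < t := lt_of_lt_of_le one_pos ht
      have e1 : ‖((t ^ b : ℝ) : ℂ)‖ = t ^ b := by
        rw [Complex.norm_real, Real.norm_eq_abs, abs_of_nonneg (Real.rpow_nonneg ht0.le _)]
      have e2 : ‖Complex.exp (-(z * t))‖ ≤ 1 := by
        rw [Complex.norm_exp]
        refine Real.exp_le_one_iff.mpr ?_
        have : (-(z * (t:ℂ))).re = -(z.re * t) := by simp [Complex.mul_re]
        rw [this]; nlinarith
      have e3 : (0:ℝ) ≤ t ^ b := Real.rpow_nonneg ht0.le _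
      calc ‖F t‖ = ‖((t ^ b : ℝ) : ℂ)‖ * ‖Complex.exp (-(z * t))‖ * ‖z‖⁻¹ := by
            rw [hF]; simp [norm_mul]
        _ ≤ t ^ b * 1 * ‖z‖⁻¹ := by rw [e1]; gcongr
        _ = t ^ b * ‖z‖⁻¹ := by ring
    · simpa using (tendsto_rpow_neg_atTop (neg_pos.mpr hb)).mul_const ‖z‖⁻¹
  have hF'int : IntegrableOn F' (Ioi 1) := by
    have : F' = fun t => (b : ℂ) * (-z)⁻¹ * (((t ^ (b - 1) : ℝ) : ℂ) * Complex.exp (-(z * t))) +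
        (((t ^ b : ℝ) : ℂ) * Complex.exp (-(z * t))) * (-z * (-z)⁻¹) := by
      funext t
      rw [hF']
      push_cast
      ring
    rw [this]
    exact ((h2.const_mul _).add (h1.mul_const _))
  have key := integral_Ioi_of_hasDerivAt_of_tendsto'
    (fun x hx => hderiv x hx) hF'int hFtop
  have hzne : (-z) ≠ 0 := neg_ne_zero.mpr hz
  have hF1 : F 1 = Complex.exp (-z) * (-z)⁻¹ := by
    rw [hF]; norm_num
  have hsplit : ∫ t in Ioi (1:ℝ), F' t =
      ((b : ℂ) * (-z)⁻¹) * (∫ t : ℝ in Ioi 1, ((t ^ (b - 1) : ℝ) : ℂ) * Complex.exp (-(z * t))) +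
      (-z * (-z)⁻¹) * (∫ t : ℝ in Ioi 1, ((t ^ b : ℝ) : ℂ) * Complex.exp (-(z * t))) := by
    have : F' = fun t => (b : ℂ) * (-z)⁻¹ * (((t ^ (b - 1) : ℝ) : ℂ) * Complex.exp (-(z * t))) +
        (-z * (-z)⁻¹) * (((t ^ b : ℝ) : ℂ) * Complex.exp (-(z * t))) := by
      funext t; rw [hF']; push_cast; ring
    rw [this, integral_add ((h2.const_mul _)) ((h1.const_mul _)),
      integral_const_mul, integral_const_mul]
  rw [hsplit, hF1] at key
  rw [mul_inv_cancel₀ hzne, one_mul] at key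
  rw [inv_neg] at key
  linear_combination key

open MeasureTheory Set Filter Topology in
private lemma stmt4_int_real (b : ℝ) (hb : -1 < b) (hb2 : b ≤ 0) {c : ℝ} (hc : 0 < c) :
    IntegrableOn (fun t : ℝ => t ^ b * Real.exp (-(c * t))) (Ioi 0) := by
  have h := (stmt4_int_Ioi0 b hb hb2 (c:ℂ) (by simpa using hc)).norm
  refine h.congr ?_
  filter_upwards [ae_restrict_mem measurableSet_Ioi] with t ht
  rw [stmt4_norm_f b (c:ℂ) ht]; norm_num

open MeasureTheory Set Filter Topology in
private lemma stmt4_diff (a : ℝ) (ha : a ∈ Set.Ioo (0:ℝ) 1) {z₀ : ℂ} (h : 0 < z₀.re) :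
    DifferentiableAt ℂ
      (fun z => ∫ t : ℝ in Ioi (0:ℝ), ((t ^ (a - 1) : ℝ) : ℂ) * Complex.exp (-(z * t))) z₀ := by
  obtain ⟨ha0, ha1⟩ := ha
  set δ := z₀.re with hδdef
  have hδ : 0 < δ := h
  have key := hasDerivAt_integral_of_dominated_loc_of_deriv_le
    (F := fun (z : ℂ) (t : ℝ) => ((t ^ (a - 1) : ℝ) : ℂ) * Complex.exp (-(z * t)))
    (F' := fun (z : ℂ) (t : ℝ) => (-(t : ℂ)) * (((t ^ (a - 1) : ℝ) : ℂ) * Complex.exp (-(z * t))))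
    (x₀ := z₀) (s := Metric.ball z₀ (δ/2))
    (bound := fun t => (1 + 4/δ) * (t ^ (a - 1) * Real.exp (-(δ/4 * t))))
    (μ := volume.restrict (Ioi (0:ℝ))) (Metric.ball_mem_nhds _ (by positivity)) ?_ ?_ ?_ ?_ ?_ ?_
  · exact key.2.differentiableAt
  · filter_upwards with z
    exact (stmt4_cont (a - 1) z).aestronglyMeasurable measurableSet_Ioi
  · exact stmt4_int_Ioi0 (a - 1) (by linarith) (by linarith) z₀ h
  · refine ContinuousOn.aestronglyMeasurable ?_ measurableSet_Ioi
    exact ((Complex.continuous_ofReal.neg).continuousOn).mul (stmt4_cont (a - 1) z₀)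
  · -- bound
    filter_upwards [ae_restrict_mem measurableSet_Ioi] with t ht z hz
    have ht0 : (0:ℝ) < t := ht
    have hzre : δ/2 ≤ z.re := by
      have h1 : |z.re - z₀.re| ≤ ‖z - z₀‖ := by
        simpa using Complex.abs_re_le_norm (z - z₀)
      have h2 : ‖z - z₀‖ < δ/2 := by
        simpa [Complex.dist_eq] using mem_ball_iff_norm.mp hz
      have := abs_sub_abs_le_abs_sub z.re z₀.re
      have := abs_le.mp (le_of_lt (lt_of_le_of_lt h1 h2))
      simp only [hδdef]
      linarith [this.1]
    have hnorm : ‖(-(t : ℂ)) * (((t ^ (a - 1) : ℝ) : ℂ) * Complex.exp (-(z * t)))‖ =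
        t * (t ^ (a - 1) * Real.exp (-(z.re * t))) := by
      rw [norm_mul, stmt4_norm_f (a - 1) z ht0]
      simp [abs_of_nonneg ht0.le]
    rw [hnorm]
    have hexp1 : Real.exp (-(z.re * t)) ≤ Real.exp (-(δ/2 * t)) := by
      apply Real.exp_le_exp.mpr; nlinarith
    have hexp2 : Real.exp (-(δ/2 * t)) = Real.exp (-(δ/4 * t)) * Real.exp (-(δ/4 * t)) := by
      rw [← Real.exp_add]; ring_nf
    have hte : t * Real.exp (-(δ/4 * t)) ≤ 4/δ := by
      have h1 : δ/4 * t ≤ Real.exp (δ/4 * t) := by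
        have := Real.add_one_le_exp (δ/4 * t); linarith
      have h2 : t ≤ 4/δ * Real.exp (δ/4 * t) := by
        have h3 := mul_le_mul_of_nonneg_left h1 (le_of_lt (by positivity : (0:ℝ) < 4/δ))
        have h4 : 4/δ * (δ/4 * t) = t := by field_simp
        linarith
      calc t * Real.exp (-(δ/4 * t)) ≤ (4/δ * Real.exp (δ/4 * t)) * Real.exp (-(δ/4 * t)) := by
            gcongr
        _ = 4/δ := by
            rw [mul_assoc, ← Real.exp_add, add_neg_cancel, Real.exp_zero, mul_one]
    calc t * (t ^ (a - 1) * Real.exp (-(z.re * t)))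
        ≤ t * (t ^ (a - 1) * Real.exp (-(δ/2 * t))) := by
          have h0 : (0:ℝ) ≤ t ^ (a - 1) := Real.rpow_nonneg ht0.le _
          gcongr
      _ = (t * Real.exp (-(δ/4 * t))) * (t ^ (a - 1) * Real.exp (-(δ/4 * t))) := by
          rw [hexp2]; ring
      _ ≤ (4/δ) * (t ^ (a - 1) * Real.exp (-(δ/4 * t))) := by
          have h0 : (0:ℝ) ≤ t ^ (a - 1) * Real.exp (-(δ/4 * t)) := by positivity
          gcongr
      _ ≤ (1 + 4/δ) * (t ^ (a - 1) * Real.exp (-(δ/4 * t))) := by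
          have h0 : (0:ℝ) ≤ t ^ (a - 1) * Real.exp (-(δ/4 * t)) := by positivity
          gcongr
          linarith
  · exact (stmt4_int_real (a - 1) (by linarith) (by linarith) (by positivity)).const_mul _
  · -- differentiability in z
    filter_upwards with t z _
    have dinner : HasDerivAt (fun z : ℂ => -(z * (t : ℂ))) (-(t : ℂ)) z := by
      have h0 := ((hasDerivAt_id z).mul_const (t : ℂ)).neg
      simp only [one_mul, id_eq] at h0
      exact h0
    have := (dinner.cexp).const_mul ((t ^ (a - 1) : ℝ) : ℂ)
    convert this using 1
    · rfl
    · ring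

open MeasureTheory Set Filter Topology in
private lemma stmt4_G_real (a : ℝ) (ha : a ∈ Set.Ioo (0:ℝ) 1) {r : ℝ} (hr : 0 < r) :
    ∫ t : ℝ in Ioi 0, ((t ^ (a - 1) : ℝ) : ℂ) * Complex.exp (-((r:ℂ) * t)) =
      (Real.Gamma a : ℂ) * (r:ℂ) ^ (-(a:ℂ)) := by
  have key := Complex.integral_cpow_mul_exp_neg_mul_Ioi (a := (a:ℂ)) (r := r)
    (by simpa using ha.1) hr
  have hcongr : ∫ t : ℝ in Ioi 0, ((t ^ (a - 1) : ℝ) : ℂ) * Complex.exp (-((r:ℂ) * t)) =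
      ∫ t : ℝ in Ioi 0, (t:ℂ) ^ ((a:ℂ) - 1) * Complex.exp (-((r:ℂ) * t)) := by
    refine setIntegral_congr_fun measurableSet_Ioi (fun t ht => ?_)
    congr 1
    rw [Complex.ofReal_cpow (le_of_lt ht)]
    norm_num
  rw [hcongr, key, Complex.Gamma_ofReal]
  rw [mul_comm]
  congr 1
  rw [one_div, Complex.inv_cpow _ _ (by
    rw [Complex.arg_ofReal_of_nonneg hr.le]; exact Real.pi_ne_zero.symm), ← Complex.cpow_neg]

open MeasureTheory Set Filter Topology in
private lemma stmt4_G_eq (a : ℝ) (ha : a ∈ Set.Ioo (0:ℝ) 1) {z : ℂ} (hz : 0 < z.re) :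
    ∫ t : ℝ in Ioi 0, ((t ^ (a - 1) : ℝ) : ℂ) * Complex.exp (-(z * t)) =
      (Real.Gamma a : ℂ) * z ^ (-(a:ℂ)) := by
  set U : Set ℂ := {w : ℂ | 0 < w.re} with hU
  have hUopen : IsOpen U := isOpen_lt continuous_const Complex.continuous_re
  have hUconn : IsPreconnected U := (convex_halfSpace_re_gt 0).isPreconnected
  set G : ℂ → ℂ := fun w => ∫ t : ℝ in Ioi 0, ((t ^ (a - 1) : ℝ) : ℂ) * Complex.exp (-(w * t))
  set H : ℂ → ℂ := fun w => (Real.Gamma a : ℂ) * w ^ (-(a:ℂ))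
  have hG : AnalyticOnNhd ℂ G U := by
    apply DifferentiableOn.analyticOnNhd ?_ hUopen
    exact fun w hw => (stmt4_diff a ha hw).differentiableWithinAt
  have hH : AnalyticOnNhd ℂ H U := by
    apply DifferentiableOn.analyticOnNhd ?_ hUopen
    intro w hw
    refine (DifferentiableAt.const_mul ?_ _).differentiableWithinAt
    exact (differentiableAt_id.cpow (differentiableAt_const _) (Or.inl hw))
  have h1U : (1:ℂ) ∈ U := by simp [hU]
  have hfreq : ∃ᶠ w in 𝓝[≠] (1:ℂ), G w = H w := by
    have htend : Tendsto (fun n : ℕ => (1 + (1 / ((n:ℝ) + 1)) : ℝ) : ℕ → ℂ) atTop (𝓝[≠] 1) := by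
      apply tendsto_nhdsWithin_of_tendsto_nhds_of_eventually_within
      · have : Tendsto (fun n : ℕ => (1 + 1 / ((n:ℝ) + 1))) atTop (𝓝 1) := by
          simpa using (tendsto_const_nhds : Tendsto (fun _ : ℕ => (1:ℝ)) atTop (𝓝 1)).add tendsto_one_div_add_atTop_nhds_zero_nat
        have := this.comp (f := fun n : ℕ => n) tendsto_id
        exact (Complex.continuous_ofReal.tendsto 1).comp (by simpa [Function.comp_def] using this)
      · filter_upwards with n
        simp only [mem_compl_iff, mem_singleton_iff]
        intro hcontra
        have : (1 : ℝ) + 1 / ((n:ℝ) + 1) = 1 := by exact_mod_cast hcontra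
        have hpos : 0 < 1 / ((n:ℝ) + 1) := by positivity
        linarith
    refine htend.frequently (Frequently.of_forall fun n => ?_)
    exact stmt4_G_real a ha (by positivity)
  exact hG.eqOn_of_preconnected_of_frequently_eq hH hUconn h1U hfreq hz

open MeasureTheory Set Filter Topology in
private lemma stmt4_key (a : ℝ) (ha : a ∈ Set.Ioo (0:ℝ) 1) {ω : ℝ} (hω : 1 ≤ ω) :
    (Real.Gamma a : ℂ) * (Complex.I * ω) ^ (-(a:ℂ)) =
      (∫ t : ℝ in Ioc (0:ℝ) 1, ((t ^ (a - 1) : ℝ) : ℂ) * Complex.exp (-(Complex.I * ω * t))) +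
        Complex.exp (-(Complex.I * ω)) / (Complex.I * ω) +
        (((a : ℂ) - 1) / (Complex.I * ω)) *
          ∫ t : ℝ in Ioi (1:ℝ), ((t ^ (a - 2) : ℝ) : ℂ) * Complex.exp (-(Complex.I * ω * t)) := by
  obtain ⟨ha0, ha1⟩ := ha
  have hω0 : (0:ℝ) < ω := lt_of_lt_of_le one_pos hω
  set w : ℂ := Complex.I * ω with hw
  have hwre : w.re = 0 := by simp [hw]
  have hwim : w.im = ω := by simp [hw]
  have hwne : w ≠ 0 := by
    intro h0
    have h1 : w.im = (0:ℂ).im := by rw [h0]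
    rw [hwim] at h1
    simp at h1
    linarith
  set zn : ℕ → ℂ := fun n => ((1 / ((n:ℝ) + 1) : ℝ) : ℂ) + w with hzn
  have hznre : ∀ n, (zn n).re = 1 / ((n:ℝ) + 1) := by
    intro n
    show (((1 / ((n:ℝ) + 1) : ℝ) : ℂ) + w).re = _
    rw [Complex.add_re, Complex.ofReal_re, hwre, add_zero]
  have hznrepos : ∀ n, 0 < (zn n).re := by
    intro n; rw [hznre]; positivity
  have hznne : ∀ n, zn n ≠ 0 := by
    intro n h0
    have := hznrepos n
    rw [h0] at this; simp at this
  have htendzn : Tendsto zn atTop (𝓝 w) := by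
    have h1 : Tendsto (fun n : ℕ => (1 / ((n:ℝ) + 1))) atTop (𝓝 0) :=
      tendsto_one_div_add_atTop_nhds_zero_nat
    have h2 : Tendsto (fun n : ℕ => ((1 / ((n:ℝ) + 1) : ℝ) : ℂ)) atTop (𝓝 (((0:ℝ) : ℂ))) :=
      (Complex.continuous_ofReal.tendsto 0).comp h1
    have h3 := h2.add_const w
    rw [show (((0:ℝ) : ℂ)) + w = w from by norm_num] at h3
    exact h3
  -- decomposition for each n
  have hdecomp : ∀ n, (Real.Gamma a : ℂ) * (zn n) ^ (-(a:ℂ)) =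
      (∫ t : ℝ in Ioc (0:ℝ) 1, ((t ^ (a - 1) : ℝ) : ℂ) * Complex.exp (-(zn n * t))) +
        Complex.exp (-(zn n)) / (zn n) +
        (((a : ℂ) - 1) / (zn n)) *
          ∫ t : ℝ in Ioi (1:ℝ), ((t ^ (a - 2) : ℝ) : ℂ) * Complex.exp (-(zn n * t)) := by
    intro n
    have hre := hznrepos n
    rw [← stmt4_G_eq a ⟨ha0, ha1⟩ hre]
    have hsplit : ∫ t : ℝ in Ioi (0:ℝ), ((t ^ (a - 1) : ℝ) : ℂ) * Complex.exp (-(zn n * t)) =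
        (∫ t : ℝ in Ioc (0:ℝ) 1, ((t ^ (a - 1) : ℝ) : ℂ) * Complex.exp (-(zn n * t))) +
          ∫ t : ℝ in Ioi (1:ℝ), ((t ^ (a - 1) : ℝ) : ℂ) * Complex.exp (-(zn n * t)) := by
      rw [← Ioc_union_Ioi_eq_Ioi (zero_le_one (α := ℝ))]
      exact setIntegral_union Ioc_disjoint_Ioi_same measurableSet_Ioi
        (stmt4_int_Ioc (a - 1) (by linarith) _ hre.le)
        (stmt4_int_Ioi_eps (a - 1) (by linarith) _ hre)
    have hibp := stmt4_ibp (a - 1) (by linarith) (zn n) (hznne n) hre.le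
      (stmt4_int_Ioi_eps (a - 1) (by linarith) _ hre)
      (by
        have := stmt4_int_Ioi_decay (a - 2) (by linarith) (zn n) hre.le
        simpa [show a - 1 - 1 = a - 2 from by ring] using this)
    rw [hsplit, hibp]
    have : a - 1 - 1 = a - 2 := by ring
    rw [this]
    push_cast
    ring
  -- limits
  have hlim1 : Tendsto (fun n => (Real.Gamma a : ℂ) * (zn n) ^ (-(a:ℂ))) atTop
      (𝓝 ((Real.Gamma a : ℂ) * w ^ (-(a:ℂ)))) := by
    have hcont : ContinuousAt (fun z : ℂ => z ^ (-(a:ℂ))) w := by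
      apply continuousAt_cpow_const
      rw [Complex.mem_slitPlane_iff]
      right
      rw [hwim]; exact ne_of_gt hω0
    exact (tendsto_const_nhds.mul (hcont.tendsto.comp htendzn))
  have hlim2 : Tendsto (fun n => ∫ t : ℝ in Ioc (0:ℝ) 1,
      ((t ^ (a - 1) : ℝ) : ℂ) * Complex.exp (-(zn n * t))) atTop
      (𝓝 (∫ t : ℝ in Ioc (0:ℝ) 1, ((t ^ (a - 1) : ℝ) : ℂ) * Complex.exp (-(w * t)))) := by
    apply tendsto_integral_filter_of_dominated_convergence (fun t => t ^ (a - 1))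
    · filter_upwards with n
      exact ((stmt4_cont (a - 1) (zn n)).mono Ioc_subset_Ioi_self).aestronglyMeasurable
        measurableSet_Ioc
    · filter_upwards with n
      filter_upwards [ae_restrict_mem measurableSet_Ioc] with t ht
      rw [stmt4_norm_f (a - 1) (zn n) ht.1]
      nth_rewrite 2 [← mul_one (t ^ (a - 1))]
      gcongr
      · exact Real.rpow_nonneg ht.1.le _
      exact Real.exp_le_one_iff.mpr (by nlinarith [ht.1.le, (hznrepos n).le])
    · have := intervalIntegral.intervalIntegrable_rpow' (a := 0) (b := 1)
        (r := a - 1) (by linarith)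
      rwa [intervalIntegrable_iff_integrableOn_Ioc_of_le zero_le_one] at this
    · filter_upwards [ae_restrict_mem measurableSet_Ioc] with t ht
      have hcont : Continuous fun z : ℂ => ((t ^ (a - 1) : ℝ) : ℂ) * Complex.exp (-(z * t)) :=
        continuous_const.mul (Complex.continuous_exp.comp
          ((continuous_id.mul continuous_const).neg))
      exact (hcont.tendsto w).comp htendzn
  have hlimJ : Tendsto (fun n => ∫ t : ℝ in Ioi (1:ℝ),
      ((t ^ (a - 2) : ℝ) : ℂ) * Complex.exp (-(zn n * t))) atTop
      (𝓝 (∫ t : ℝ in Ioi (1:ℝ), ((t ^ (a - 2) : ℝ) : ℂ) * Complex.exp (-(w * t)))) := by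
    apply tendsto_integral_filter_of_dominated_convergence (fun t => t ^ (a - 2))
    · filter_upwards with n
      exact ((stmt4_cont (a - 2) (zn n)).mono (Ioi_subset_Ioi zero_le_one)).aestronglyMeasurable
        measurableSet_Ioi
    · filter_upwards with n
      filter_upwards [ae_restrict_mem measurableSet_Ioi] with t ht
      have ht0 : (0:ℝ) < t := lt_trans one_pos ht
      rw [stmt4_norm_f (a - 2) (zn n) ht0]
      nth_rewrite 2 [← mul_one (t ^ (a - 2))]
      gcongr
      exact Real.exp_le_one_iff.mpr (by nlinarith [ht0.le, (hznrepos n).le])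
    · exact integrableOn_Ioi_rpow_of_lt (by linarith) one_pos
    · filter_upwards [ae_restrict_mem measurableSet_Ioi] with t ht
      have hcont : Continuous fun z : ℂ => ((t ^ (a - 2) : ℝ) : ℂ) * Complex.exp (-(z * t)) :=
        continuous_const.mul (Complex.continuous_exp.comp
          ((continuous_id.mul continuous_const).neg))
      exact (hcont.tendsto w).comp htendzn
  have hlim3 : Tendsto (fun n => Complex.exp (-(zn n)) / (zn n)) atTop
      (𝓝 (Complex.exp (-w) / w)) := by
    exact ((Complex.continuous_exp.tendsto _).comp (htendzn.neg)).div htendzn hwne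
  have hlim4 : Tendsto (fun n => (((a : ℂ) - 1) / (zn n)) *
      ∫ t : ℝ in Ioi (1:ℝ), ((t ^ (a - 2) : ℝ) : ℂ) * Complex.exp (-(zn n * t))) atTop
      (𝓝 ((((a : ℂ) - 1) / w) *
        ∫ t : ℝ in Ioi (1:ℝ), ((t ^ (a - 2) : ℝ) : ℂ) * Complex.exp (-(w * t)))) := by
    exact (tendsto_const_nhds.div htendzn hwne).mul hlimJ
  have := tendsto_nhds_unique hlim1 (by
    simpa only [← hdecomp] using ((hlim2.add hlim3).add hlim4) :
    Tendsto (fun n => (Real.Gamma a : ℂ) * (zn n) ^ (-(a:ℂ))) atTop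
      (𝓝 ((∫ t : ℝ in Ioc (0:ℝ) 1, ((t ^ (a - 1) : ℝ) : ℂ) * Complex.exp (-(w * t))) +
        Complex.exp (-w) / w +
        (((a : ℂ) - 1) / w) *
          ∫ t : ℝ in Ioi (1:ℝ), ((t ^ (a - 2) : ℝ) : ℂ) * Complex.exp (-(w * t)))))
  exact this

open MeasureTheory Set Filter Topology in
theorem stmt_4 (a : ℝ) (ha : a ∈ Set.Ioo (0:ℝ) 1) :
    ∃ C > (0:ℝ), ∀ ω : ℝ, 1 ≤ ω →
      |(∫ x in (0:ℝ)..1, x ^ (a - 1) * Real.cos (ω * x)) -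
        Real.Gamma a * Real.cos (Real.pi * a / 2) / ω ^ a - Real.sin ω / ω| ≤ C / ω ^ 2 := by
  obtain ⟨ha0, ha1⟩ := id ha
  refine ⟨3, by norm_num, fun ω hω => ?_⟩
  have hω0 : (0:ℝ) < ω := lt_of_lt_of_le one_pos hω
  set w : ℂ := Complex.I * ω with hw
  have hwre : w.re = 0 := by simp [hw]
  have hwim : w.im = ω := by simp [hw]
  have hwne : w ≠ 0 := by
    intro h0
    have h1 : w.im = (0:ℂ).im := by rw [h0]
    rw [hwim] at h1; simp at h1; linarith
  have habs : ‖w‖ = ω := by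
    rw [hw, norm_mul, Complex.norm_I, Complex.norm_real, Real.norm_eq_abs, abs_of_pos hω0, one_mul]
  have key := stmt4_key a ha hω
  -- second IBP for J
  set J : ℂ := ∫ t : ℝ in Ioi (1:ℝ), ((t ^ (a - 2) : ℝ) : ℂ) * Complex.exp (-(w * t)) with hJdef
  set K : ℂ := ∫ t : ℝ in Ioi (1:ℝ), ((t ^ (a - 3) : ℝ) : ℂ) * Complex.exp (-(w * t)) with hKdef
  have hibpJ : J = Complex.exp (-w) / w + (((a - 2 : ℝ) : ℂ) / w) * K := by
    have h2 := stmt4_int_Ioi_decay (a - 2) (by linarith) w (le_of_eq hwre.symm)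
    have h3 := stmt4_int_Ioi_decay (a - 3) (by linarith) w (le_of_eq hwre.symm)
    have := stmt4_ibp (a - 2) (by linarith) w hwne (le_of_eq hwre.symm) h2
      (by simpa [show a - 2 - 1 = a - 3 from by ring] using h3)
    rw [hJdef, this, show a - 2 - 1 = a - 3 from by ring, ← hKdef]
  have hexpw : ‖Complex.exp (-w)‖ = 1 := by
    rw [Complex.norm_exp]
    simp [Complex.neg_re, hwre]
  have hK : ‖K‖ ≤ 1 := by
    have h1 : ‖K‖ ≤ ∫ t : ℝ in Ioi (1:ℝ), t ^ (a - 3) := by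
      rw [hKdef]
      refine le_trans (norm_integral_le_integral_norm _) (le_of_eq ?_)
      refine setIntegral_congr_fun measurableSet_Ioi (fun t ht => ?_)
      rw [stmt4_norm_f (a - 3) w (lt_trans one_pos ht), hwre]
      norm_num
    have h2 : ∫ t : ℝ in Ioi (1:ℝ), t ^ (a - 3) = -1 / (a - 2) := by
      rw [integral_Ioi_rpow_of_lt (by linarith) one_pos]
      norm_num
      rw [show a - 3 + 1 = a - 2 from by ring]
    rw [h2] at h1
    refine le_trans h1 ?_
    have h3 : (-1 : ℝ) / (a - 2) = 1 / (2 - a) := by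
      rw [div_eq_div_iff (by linarith) (by linarith)]; ring
    rw [h3, div_le_one (by linarith)]
    linarith
  have hJ : ‖J‖ ≤ 3 / ω := by
    rw [hibpJ]
    refine le_trans (norm_add_le _ _) ?_
    have e1 : ‖Complex.exp (-w) / w‖ = 1 / ω := by
      rw [norm_div, hexpw, habs]
    have e2 : ‖(((a - 2 : ℝ) : ℂ) / w) * K‖ ≤ (2 - a) / ω := by
      rw [norm_mul, norm_div, Complex.norm_real, Real.norm_eq_abs,
        abs_of_neg (by linarith : a - 2 < 0), habs]
      calc -(a - 2) / ω * ‖K‖ ≤ -(a - 2) / ω * 1 :=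
            mul_le_mul_of_nonneg_left hK (div_nonneg (by linarith) hω0.le)
        _ = (2 - a) / ω := by ring
    rw [e1] at *
    calc 1 / ω + ‖(((a - 2 : ℝ) : ℂ) / w) * K‖ ≤ 1 / ω + (2 - a) / ω := by linarith
      _ ≤ 3 / ω := by
          rw [← add_div, div_le_div_iff₀ hω0 hω0]
          nlinarith
  -- real part assembly
  rw [← hw] at key
  set P : ℂ := ∫ t : ℝ in Ioc (0:ℝ) 1, ((t ^ (a - 1) : ℝ) : ℂ) * Complex.exp (-(w * t)) with hPdef
  set R : ℂ := (((a:ℂ) - 1) / w) * J with hRdef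
  have hPre : (∫ x in (0:ℝ)..1, x ^ (a - 1) * Real.cos (ω * x)) = P.re := by
    rw [hPdef, intervalIntegral.integral_of_le zero_le_one]
    have hint : IntegrableOn (fun t : ℝ => ((t ^ (a - 1) : ℝ) : ℂ) * Complex.exp (-(w * t)))
        (Ioc 0 1) := stmt4_int_Ioc (a - 1) (by linarith) w (le_of_eq hwre.symm)
    have hre_eq : Complex.re = RCLike.re := rfl
    rw [hre_eq, ← integral_re hint]
    refine setIntegral_congr_fun measurableSet_Ioc (fun t ht => ?_)
    have harg : -(w * t) = ((-(ω * t) : ℝ) : ℂ) * Complex.I := by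
      rw [hw]; push_cast; ring
    have hsplit2 : (((t ^ (a - 1) : ℝ) : ℂ) * Complex.exp (-(w * t))).re
        = t ^ (a - 1) * (Complex.exp (-(w * t))).re := Complex.re_ofReal_mul _ _
    rw [← hre_eq, hsplit2, harg, Complex.exp_ofReal_mul_I_re, Real.cos_neg]
  have hQre : (Complex.exp (-w) / w).re = -(Real.sin ω / ω) := by
    have harg : -w = ((-ω : ℝ) : ℂ) * Complex.I := by rw [hw]; push_cast; ring
    rw [harg, Complex.div_re, hwre, hwim, Complex.normSq_apply, hwre, hwim,
      Complex.exp_ofReal_mul_I_re, Complex.exp_ofReal_mul_I_im, Real.cos_neg, Real.sin_neg]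
    field_simp
    ring
  have hMre : ((Real.Gamma a : ℂ) * w ^ (-(a:ℂ))).re
      = Real.Gamma a * Real.cos (π * a / 2) / ω ^ a := by
    have hlog : Complex.log w = ((Real.log ω : ℝ) : ℂ) + ((π/2 : ℝ) : ℂ) * Complex.I := by
      apply Complex.ext
      · rw [Complex.log_re, habs]; simp
      · rw [Complex.log_im]
        have harg : w.arg = π/2 := by
          rw [hw, mul_comm, Complex.arg_real_mul Complex.I hω0]
          exact Complex.arg_I
        rw [harg]; simp
    have hcpow : w ^ (-(a:ℂ)) = Complex.exp (Complex.log w * (-(a:ℂ))) := by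
      rw [Complex.cpow_def_of_ne_zero hwne]
    have hprod : Complex.log w * (-(a:ℂ)) =
        ((-(Real.log ω * a) : ℝ) : ℂ) + ((-(π/2*a) : ℝ) : ℂ) * Complex.I := by
      rw [hlog]; push_cast; ring
    have hre2 : (Complex.exp (((-(Real.log ω * a) : ℝ) : ℂ)
        + ((-(π/2*a) : ℝ) : ℂ) * Complex.I)).re
        = Real.exp (-(Real.log ω * a)) * Real.cos (-(π/2*a)) := by
      rw [Complex.exp_re]; simp
    rw [hcpow, hprod]
    have hmulre : ((Real.Gamma a : ℂ) * Complex.exp (((-(Real.log ω * a) : ℝ) : ℂ)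
        + ((-(π/2*a) : ℝ) : ℂ) * Complex.I)).re
        = Real.Gamma a * (Complex.exp (((-(Real.log ω * a) : ℝ) : ℂ)
        + ((-(π/2*a) : ℝ) : ℂ) * Complex.I)).re := by
      simp [Complex.mul_re]
    rw [hmulre, hre2, Real.cos_neg, show π/2*a = π*a/2 from by ring]
    have hexp : Real.exp (-(Real.log ω * a)) = ω ^ (-a) := by
      rw [Real.rpow_def_of_pos hω0]; ring_nf
    rw [hexp, Real.rpow_neg hω0.le]
    ring
  have hkey_re := congrArg Complex.re key
  rw [Complex.add_re, Complex.add_re, hMre, hQre] at hkey_re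
  rw [hPre]
  have hgoal : P.re - Real.Gamma a * Real.cos (π * a / 2) / ω ^ a - Real.sin ω / ω = -R.re := by
    linarith [hkey_re]
  rw [hgoal, abs_neg]
  have hRre : |R.re| ≤ ‖R‖ := by
    exact Complex.abs_re_le_norm R
  have hRbound : ‖R‖ ≤ 3 / ω ^ 2 := by
    rw [hRdef, norm_mul, norm_div, habs]
    have e1 : ‖(a:ℂ) - 1‖ = 1 - a := by
      rw [show ((a:ℂ) - 1) = (((a - 1 : ℝ)) : ℂ) from by push_cast; ring, Complex.norm_real,
        Real.norm_eq_abs, abs_of_neg (by linarith : a - 1 < 0)]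
      ring
    rw [e1]
    calc (1 - a) / ω * ‖J‖ ≤ (1 - a) / ω * (3 / ω) :=
          mul_le_mul_of_nonneg_left hJ (div_nonneg (by linarith) hω0.le)
      _ = (1 - a) * 3 / ω ^ 2 := by ring
      _ ≤ 3 / ω ^ 2 := by
          apply div_le_div_of_nonneg_right ?_ (by positivity)
          · nlinarith
  exact le_trans hRre hRbound
end

section
/- For a ∈ (0,1), there exists C > 0 such that for all ω ≥ 1, |∫₀¹ x^{a−1} sin(ωx) dx − Γ(a) sin(πa/2)/ω^a + cos(ω)/ω| ≤ C/ω². -/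
open Real MeasureTheory Set

set_option maxHeartbeats 1000000



lemma aux_inner {t ω : ℝ} (hω : 0 < ω) :
    ∫ x in (0:ℝ)..1, Real.exp (-(t*x)) * Real.sin (ω*x)
      = (ω - Real.exp (-t) * (ω * Real.cos ω + t * Real.sin ω)) / (t^2 + ω^2) := by
  have hden : t^2 + ω^2 ≠ 0 := by positivity
  have hF : ∀ x ∈ uIcc (0:ℝ) 1, HasDerivAt
      (fun x : ℝ => Real.exp (-(t*x)) * (-(t * Real.sin (ω*x)) - ω * Real.cos (ω*x)) / (t^2+ω^2))
      (Real.exp (-(t*x)) * Real.sin (ω*x)) x := by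
    intro x _
    have h1 : HasDerivAt (fun x : ℝ => Real.exp (-(t*x))) (-t * Real.exp (-(t*x))) x := by
      have := (Real.hasDerivAt_exp (-(t*x))).comp x (((hasDerivAt_id x).const_mul t).neg)
      simpa [mul_comm, Function.comp_def, Pi.neg_def, Pi.sub_def] using this
    have h2 : HasDerivAt (fun x : ℝ => -(t * Real.sin (ω*x)) - ω * Real.cos (ω*x))
        (-(t * (ω * Real.cos (ω*x))) - ω * (-Real.sin (ω*x) * ω)) x := by
      have hs : HasDerivAt (fun x : ℝ => Real.sin (ω*x)) (Real.cos (ω*x) * ω) x := by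
        simpa [mul_comm, Function.comp_def, Pi.neg_def, Pi.sub_def] using (Real.hasDerivAt_sin (ω*x)).comp x ((hasDerivAt_id x).const_mul ω)
      have hc : HasDerivAt (fun x : ℝ => Real.cos (ω*x)) (-Real.sin (ω*x) * ω) x := by
        simpa [mul_comm, Function.comp_def, Pi.neg_def, Pi.sub_def] using (Real.hasDerivAt_cos (ω*x)).comp x ((hasDerivAt_id x).const_mul ω)
      simpa [mul_comm, Function.comp_def, Pi.neg_def, Pi.sub_def] using ((hs.const_mul t).neg.sub (hc.const_mul ω))
    have := (h1.mul h2).div_const (t^2+ω^2)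
    refine this.congr_deriv ?_
    field_simp
    ring
  have hint : IntervalIntegrable (fun x => Real.exp (-(t*x)) * Real.sin (ω*x)) volume 0 1 :=
    (Continuous.intervalIntegrable (by continuity) 0 1)
  rw [intervalIntegral.integral_eq_sub_of_hasDerivAt hF hint]
  simp [mul_comm]
  ring

lemma aux_gauss {a s : ℝ} (ha : 0 < a) (ha1 : a < 1) (hs : 0 < s) :
    ∫ u in Ioi (0:ℝ), u ^ (-a) * Real.exp (-(s * u ^ 2)) =
      (1/2) * (1/s) ^ ((1-a)/2) * Real.Gamma ((1-a)/2) := by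
  have h2 : (0:ℝ) < 2 := two_pos
  have key := MeasureTheory.integral_comp_rpow_Ioi_of_pos
    (g := fun v => (1/2) * (v ^ ((1-a)/2 - 1) * Real.exp (-(s * v)))) h2
  have h1a : 0 < (1-a)/2 := by linarith
  rw [show ∫ u in Ioi (0:ℝ), u ^ (-a) * Real.exp (-(s * u ^ 2)) =
      ∫ x in Ioi (0:ℝ), (2 * x ^ ((2:ℝ) - 1)) •
        ((fun v => (1/2) * (v ^ ((1-a)/2 - 1) * Real.exp (-(s * v)))) (x ^ (2:ℝ))) from ?_, key]
  · rw [integral_const_mul, integral_rpow_mul_exp_neg_mul_Ioi h1a hs]; ring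
  · refine setIntegral_congr_fun measurableSet_Ioi (fun x hx => ?_)
    have hx0 : (0:ℝ) < x := hx
    have hsq : x ^ (2:ℝ) = x ^ 2 := by
      rw [← Real.rpow_natCast x 2]; norm_num
    simp only [smul_eq_mul]
    rw [← Real.rpow_mul hx0.le, hsq,
      show (2:ℝ) * ((1-a)/2 - 1) = -a - 1 by ring,
      show (2:ℝ) - 1 = 1 by norm_num, Real.rpow_one,
      show 2 * x * (1/2 * (x ^ (-a-1) * Real.exp (-(s * x ^ 2)))) =
        (x * x ^ (-a-1)) * Real.exp (-(s * x ^ 2)) by ring,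
      ← Real.rpow_one_add' hx0.le (by intro h; linarith : (1:ℝ) + (-a-1) ≠ 0)]
    norm_num

lemma aux_meas {a : ℝ} : Measurable (fun u : ℝ => u ^ (-a)) :=
  by measurability

lemma aux_intK {a : ℝ} (ha : 0 < a) (ha1 : a < 1) :
    IntegrableOn (fun u : ℝ => u ^ (-a) * (1+u^2)⁻¹) (Ioi 0) := by
  have hmeas : AEStronglyMeasurable (fun u : ℝ => u ^ (-a) * (1+u^2)⁻¹)
      (volume.restrict (Ioi (0:ℝ))) :=
    ((aux_meas.mul ((measurable_const.add (measurable_id.pow_const 2)).inv))).aestronglyMeasurable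
  rw [← Ioc_union_Ioi_eq_Ioi (zero_le_one (α := ℝ))]
  refine IntegrableOn.union ?_ ?_
  · refine Integrable.mono (g := fun u : ℝ => u ^ (-a)) ?_ (hmeas.mono_set Ioc_subset_Ioi_self) ?_
    · exact (intervalIntegral.intervalIntegrable_rpow' (by linarith)).1
    · refine (ae_restrict_iff' measurableSet_Ioc).2 (ae_of_all _ fun u hu => ?_)
      have hu0 : 0 < u := hu.1
      rw [Real.norm_eq_abs, Real.norm_eq_abs, abs_mul,
        abs_of_nonneg (Real.rpow_nonneg hu0.le _), abs_of_nonneg (by positivity : (0:ℝ) ≤ (1+u^2)⁻¹)]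
      nth_rewrite 2 [← mul_one (u ^ (-a))]
      gcongr
      rw [inv_le_one_iff₀]; right; nlinarith [sq_nonneg u]
  · refine Integrable.mono (g := fun u : ℝ => (1+u^2)⁻¹)
      (integrable_inv_one_add_sq.integrableOn) (hmeas.mono_set (Ioi_subset_Ioi zero_le_one)) ?_
    refine (ae_restrict_iff' measurableSet_Ioi).2 (ae_of_all _ fun u hu => ?_)
    have hu1 : (1:ℝ) ≤ u := le_of_lt hu
    rw [Real.norm_eq_abs, Real.norm_eq_abs, abs_mul,
      abs_of_nonneg (Real.rpow_nonneg (by linarith) _),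
      abs_of_nonneg (by positivity : (0:ℝ) ≤ (1+u^2)⁻¹)]
    nth_rewrite 2 [← one_mul ((1+u^2)⁻¹)]
    gcongr
    exact Real.rpow_le_one_of_one_le_of_nonpos hu1 (by linarith)


lemma aux_exp_int {c : ℝ} (hc : 0 < c) :
    ∫ s in Ioi (0:ℝ), Real.exp (-(c*s)) = 1/c := by
  have := integral_rpow_mul_exp_neg_mul_Ioi one_pos hc
  simp only [sub_self, Real.rpow_zero, one_mul, Real.rpow_one] at this
  simpa using this

lemma aux_K {a : ℝ} (ha : 0 < a) (ha1 : a < 1)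
    (hK : IntegrableOn (fun u : ℝ => u ^ (-a) * (1+u^2)⁻¹) (Ioi 0))
    (hgauss : ∀ s : ℝ, 0 < s → ∫ u in Ioi (0:ℝ), u ^ (-a) * Real.exp (-(s * u ^ 2)) =
      (1/2) * (1/s) ^ ((1-a)/2) * Real.Gamma ((1-a)/2)) :
    ∫ u in Ioi (0:ℝ), u ^ (-a) * (1+u^2)⁻¹
      = Real.Gamma ((1-a)/2) * Real.Gamma ((1+a)/2) / 2 := by
  have hmeas : Measurable (fun p : ℝ×ℝ => p.1 ^ (-a) * Real.exp (-((1+p.1^2) * p.2))) := by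
    measurability
  have hprod : Integrable (fun p : ℝ×ℝ => p.1 ^ (-a) * Real.exp (-((1+p.1^2) * p.2)))
      ((volume.restrict (Ioi (0:ℝ))).prod (volume.restrict (Ioi (0:ℝ)))) := by
    refine (integrable_prod_iff hmeas.aestronglyMeasurable).2 ⟨?_, ?_⟩
    · refine ae_of_all _ fun u => ?_
      have h1 : (0:ℝ) < 1 + u^2 := by positivity
      have h2 := (exp_neg_integrableOn_Ioi 0 h1).const_mul (u ^ (-a))
      simpa only [neg_mul] using h2
    · refine Integrable.congr hK ?_
      filter_upwards [ae_restrict_mem measurableSet_Ioi] with u hu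
      have hu0 : (0:ℝ) < u := hu
      have h1 : (0:ℝ) < 1 + u^2 := by positivity
      have hn : ∀ s : ℝ, ‖u ^ (-a) * Real.exp (-((1+u^2) * s))‖
          = u ^ (-a) * Real.exp (-((1+u^2) * s)) := fun s => by
        rw [Real.norm_eq_abs, abs_mul, abs_of_nonneg (Real.rpow_nonneg hu0.le _),
          abs_of_nonneg (Real.exp_nonneg _)]
      simp only [hn]
      rw [MeasureTheory.integral_const_mul]
      have : ∫ s in Ioi (0:ℝ), Real.exp (-((1+u^2)*s)) = 1/(1+u^2) := by
        have := integral_rpow_mul_exp_neg_mul_Ioi one_pos h1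
        simp only [sub_self, Real.rpow_zero, one_mul, Real.rpow_one] at this
        simpa using this
      rw [this, one_div]
  have swap := MeasureTheory.integral_integral_swap
    (f := fun u s : ℝ => u ^ (-a) * Real.exp (-((1+u^2) * s))) hprod
  have lhs_eq : (∫ u in Ioi (0:ℝ), ∫ s in Ioi (0:ℝ), u ^ (-a) * Real.exp (-((1+u^2) * s)))
      = ∫ u in Ioi (0:ℝ), u ^ (-a) * (1+u^2)⁻¹ := by
    refine setIntegral_congr_fun measurableSet_Ioi (fun u hu => ?_)
    have h1 : (0:ℝ) < 1 + u^2 := by positivity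
    rw [MeasureTheory.integral_const_mul, aux_exp_int h1, one_div]
  have rhs_eq : (∫ s in Ioi (0:ℝ), ∫ u in Ioi (0:ℝ), u ^ (-a) * Real.exp (-((1+u^2) * s)))
      = Real.Gamma ((1-a)/2) * Real.Gamma ((1+a)/2) / 2 := by
    have step1 : (∫ s in Ioi (0:ℝ), ∫ u in Ioi (0:ℝ), u ^ (-a) * Real.exp (-((1+u^2) * s)))
        = ∫ s in Ioi (0:ℝ), ((1/2) * Real.Gamma ((1-a)/2)) * (s ^ ((1+a)/2 - 1) * Real.exp (-(1*s))) := by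
      refine setIntegral_congr_fun measurableSet_Ioi (fun s hs => ?_)
      have hs0 : (0:ℝ) < s := hs
      have h2 : (∫ u in Ioi (0:ℝ), u ^ (-a) * Real.exp (-((1+u^2) * s))) = ∫ u in Ioi (0:ℝ),
          Real.exp (-s) * (u ^ (-a) * Real.exp (-(s * u^2))) := by
        refine setIntegral_congr_fun measurableSet_Ioi (fun u hu => ?_)
        rw [← mul_assoc, mul_comm (Real.exp (-s)), mul_assoc, ← Real.exp_add]
        ring_nf
      rw [h2, MeasureTheory.integral_const_mul, hgauss s hs0]
      rw [one_div s, Real.inv_rpow hs0.le, ← Real.rpow_neg hs0.le]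
      rw [show -((1-a)/2) = (1+a)/2 - 1 by ring]
      rw [one_mul]
      ring
    rw [step1, MeasureTheory.integral_const_mul,
      integral_rpow_mul_exp_neg_mul_Ioi (by linarith : (0:ℝ) < (1+a)/2) one_pos]
    simp only [one_div, inv_one, Real.one_rpow, one_mul]
    ring
  rw [← lhs_eq, swap, rhs_eq]

-- domination by Gamma integrand
lemma aux_dom {s : ℝ} (hs : 0 < s) {f : ℝ → ℝ}
    (hm : AEStronglyMeasurable f (volume.restrict (Ioi 0)))
    (hb : ∀ t ∈ Ioi (0:ℝ), ‖f t‖ ≤ Real.exp (-t) * t ^ (s-1)) :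
    IntegrableOn f (Ioi 0) := by
  refine Integrable.mono (Real.GammaIntegral_convergent hs) hm ?_
  filter_upwards [ae_restrict_mem measurableSet_Ioi] with t ht
  refine le_trans (hb t ht) (le_of_eq ?_)
  rw [Real.norm_eq_abs, abs_of_nonneg (mul_nonneg (Real.exp_nonneg _) (Real.rpow_nonneg (le_of_lt ht) _))]

lemma aux_int_exp {a x : ℝ} (ha : 0 < a) (ha1 : a < 1) (hx : 0 < x) :
    IntegrableOn (fun t : ℝ => t ^ (-a) * Real.exp (-(x*t))) (Ioi 0) := by
  have hmeas : AEStronglyMeasurable (fun t : ℝ => t ^ (-a) * Real.exp (-(x*t)))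
      (volume.restrict (Ioi (0:ℝ))) := by
    have m1 : Measurable fun t : ℝ => t ^ (-a) := by measurability
    exact (m1.mul (Real.measurable_exp.comp
      ((measurable_const.mul measurable_id).neg))).aestronglyMeasurable
  rw [← Ioc_union_Ioi_eq_Ioi (zero_le_one (α := ℝ))]
  refine IntegrableOn.union ?_ ?_
  · refine Integrable.mono (g := fun t : ℝ => t ^ (-a))
      ((intervalIntegral.intervalIntegrable_rpow' (by linarith)).1)
      (hmeas.mono_set Ioc_subset_Ioi_self) ?_
    filter_upwards [ae_restrict_mem measurableSet_Ioc] with t ht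
    have ht0 : 0 < t := ht.1
    rw [Real.norm_eq_abs, Real.norm_eq_abs, abs_mul,
      abs_of_nonneg (Real.rpow_nonneg ht0.le _), abs_of_nonneg (Real.exp_nonneg _)]
    nth_rewrite 2 [← mul_one (t ^ (-a))]
    gcongr
    exact Real.exp_le_one_iff.2 (by nlinarith)
  · refine Integrable.mono (g := fun t : ℝ => Real.exp (-x*t))
      (exp_neg_integrableOn_Ioi 1 hx)
      (hmeas.mono_set (Ioi_subset_Ioi zero_le_one)) ?_
    filter_upwards [ae_restrict_mem measurableSet_Ioi] with t ht
    have ht1 : (1:ℝ) ≤ t := le_of_lt ht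
    rw [Real.norm_eq_abs, Real.norm_eq_abs, abs_mul,
      abs_of_nonneg (Real.rpow_nonneg (by linarith) _), abs_of_nonneg (Real.exp_nonneg _),
      abs_of_nonneg (Real.exp_nonneg _), neg_mul]
    nth_rewrite 2 [← one_mul (Real.exp (-(x*t)))]
    gcongr
    exact Real.rpow_le_one_of_one_le_of_nonpos ht1 (by linarith)

lemma aux_intP {a ω : ℝ} (ha : 0 < a) (ha1 : a < 1) (hω : 1 ≤ ω) :
    IntegrableOn (fun t : ℝ => t ^ (-a) * (ω/(t^2+ω^2))) (Ioi 0) := by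
  have hω0 : (0:ℝ) < ω := lt_of_lt_of_le one_pos hω
  have hmeas : AEStronglyMeasurable (fun t : ℝ => t ^ (-a) * (ω/(t^2+ω^2)))
      (volume.restrict (Ioi (0:ℝ))) := by
    apply Measurable.aestronglyMeasurable; measurability
  rw [← Ioc_union_Ioi_eq_Ioi (zero_le_one (α := ℝ))]
  refine IntegrableOn.union ?_ ?_
  · refine Integrable.mono (g := fun t : ℝ => t ^ (-a))
      ((intervalIntegral.intervalIntegrable_rpow' (by linarith)).1)
      (hmeas.mono_set Ioc_subset_Ioi_self) ?_
    filter_upwards [ae_restrict_mem measurableSet_Ioc] with t ht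
    have ht0 : 0 < t := ht.1
    have hden : (0:ℝ) < t^2+ω^2 := by positivity
    rw [Real.norm_eq_abs, Real.norm_eq_abs, abs_mul,
      abs_of_nonneg (Real.rpow_nonneg ht0.le _), abs_of_nonneg (by positivity : (0:ℝ) ≤ ω/(t^2+ω^2))]
    nth_rewrite 2 [← mul_one (t ^ (-a))]
    gcongr
    rw [div_le_one hden]
    nlinarith [sq_nonneg t]
  · refine Integrable.mono (g := fun t : ℝ => 2*ω*(1+t^2)⁻¹)
      ((integrable_inv_one_add_sq.const_mul (2*ω)).integrableOn)
      (hmeas.mono_set (Ioi_subset_Ioi zero_le_one)) ?_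
    filter_upwards [ae_restrict_mem measurableSet_Ioi] with t ht
    have ht1 : (1:ℝ) ≤ t := le_of_lt ht
    have hden : (0:ℝ) < t^2+ω^2 := by positivity
    have h1t : (0:ℝ) < 1+t^2 := by positivity
    rw [Real.norm_eq_abs, Real.norm_eq_abs, abs_mul,
      abs_of_nonneg (Real.rpow_nonneg (by linarith) _),
      abs_of_nonneg (by positivity : (0:ℝ) ≤ ω/(t^2+ω^2)),
      abs_of_nonneg (by positivity : (0:ℝ) ≤ 2*ω*(1+t^2)⁻¹)]
    calc t ^ (-a) * (ω/(t^2+ω^2)) ≤ 1 * (ω/(t^2+ω^2)) := by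
          gcongr
          exact Real.rpow_le_one_of_one_le_of_nonpos ht1 (by linarith)
      _ ≤ 2*ω*(1+t^2)⁻¹ := by
          rw [one_mul, ← div_eq_mul_inv, div_le_div_iff₀ hden h1t]
          have hω3 : ω ≤ ω^3 := by nlinarith
          nlinarith [mul_nonneg hω0.le (sq_nonneg t)]


lemma aux_F {a ω : ℝ} (ha : 0 < a) (ha1 : a < 1) (hω : 0 < ω)
    (hinner : ∀ t : ℝ, ∫ x in (0:ℝ)..1, Real.exp (-(t*x)) * Real.sin (ω*x)
      = (ω - Real.exp (-t) * (ω * Real.cos ω + t * Real.sin ω)) / (t^2 + ω^2))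
    (hexp : ∀ x : ℝ, 0 < x → IntegrableOn (fun t : ℝ => t ^ (-a) * Real.exp (-(x*t))) (Ioi 0)) :
    Real.Gamma (1-a) * (∫ x in (0:ℝ)..1, x ^ (a-1) * Real.sin (ω*x))
      = ∫ t in Ioi (0:ℝ), t ^ (-a) *
          ((ω - Real.exp (-t) * (ω * Real.cos ω + t * Real.sin ω)) / (t^2 + ω^2)) := by
  have h1a : (0:ℝ) < 1 - a := by linarith
  have hG : (0:ℝ) < Real.Gamma (1-a) := Real.Gamma_pos_of_pos h1a
  have hval : ∀ x : ℝ, 0 < x →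
      ∫ t in Ioi (0:ℝ), t ^ (-a) * Real.exp (-(x*t)) = x ^ (a-1) * Real.Gamma (1-a) := by
    intro x hx
    have h := integral_rpow_mul_exp_neg_mul_Ioi h1a hx
    rw [show (1-a)-1 = -a by ring] at h
    rw [h, one_div, Real.inv_rpow hx.le, ← Real.rpow_neg hx.le, show -(1-a) = a-1 by ring]
  have hmeas : Measurable (fun p : ℝ×ℝ => p.2 ^ (-a) * Real.exp (-(p.1*p.2)) * Real.sin (ω*p.1)) := by
    measurability
  have hnorm : ∀ x t : ℝ, 0 < t → ‖t ^ (-a) * Real.exp (-(x*t)) * Real.sin (ω*x)‖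
      = (t ^ (-a) * Real.exp (-(x*t))) * |Real.sin (ω*x)| := by
    intro x t ht
    rw [Real.norm_eq_abs, abs_mul, abs_mul, abs_of_nonneg (Real.rpow_nonneg ht.le _),
      abs_of_nonneg (Real.exp_nonneg _)]
  have hrpowInt : IntegrableOn (fun x : ℝ => x ^ (a-1)) (Ioc 0 1) :=
    (intervalIntegral.intervalIntegrable_rpow' (by linarith : (-1:ℝ) < a-1)).1
  have hprod : Integrable (fun p : ℝ×ℝ => p.2 ^ (-a) * Real.exp (-(p.1*p.2)) * Real.sin (ω*p.1))
      ((volume.restrict (Ioc (0:ℝ) 1)).prod (volume.restrict (Ioi (0:ℝ)))) := by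
    refine (integrable_prod_iff hmeas.aestronglyMeasurable).2 ⟨?_, ?_⟩
    · filter_upwards [ae_restrict_mem measurableSet_Ioc] with x hx
      exact (hexp x hx.1).mul_const _
    · refine Integrable.mono (g := fun x : ℝ => Real.Gamma (1-a) * x ^ (a-1))
        (hrpowInt.const_mul _) (hmeas.norm.aestronglyMeasurable.integral_prod_right') ?_
      filter_upwards [ae_restrict_mem measurableSet_Ioc] with x hx
      have hx0 : 0 < x := hx.1
      have he : (∫ t in Ioi (0:ℝ), ‖t ^ (-a) * Real.exp (-(x*t)) * Real.sin (ω*x)‖)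
          = x ^ (a-1) * Real.Gamma (1-a) * |Real.sin (ω*x)| := by
        rw [show (∫ t in Ioi (0:ℝ), ‖t ^ (-a) * Real.exp (-(x*t)) * Real.sin (ω*x)‖)
            = ∫ t in Ioi (0:ℝ), (t ^ (-a) * Real.exp (-(x*t))) * |Real.sin (ω*x)| from
          setIntegral_congr_fun measurableSet_Ioi (fun t ht => hnorm x t ht)]
        rw [MeasureTheory.integral_mul_const, hval x hx0]
      rw [Real.norm_eq_abs, Real.norm_eq_abs, he, abs_of_nonneg (by positivity :
        (0:ℝ) ≤ x ^ (a-1) * Real.Gamma (1-a) * |Real.sin (ω*x)|),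
        abs_of_nonneg (by positivity : (0:ℝ) ≤ Real.Gamma (1-a) * x ^ (a-1))]
      calc x ^ (a-1) * Real.Gamma (1-a) * |Real.sin (ω*x)|
          ≤ x ^ (a-1) * Real.Gamma (1-a) * 1 := by gcongr; exact Real.abs_sin_le_one _
        _ = Real.Gamma (1-a) * x ^ (a-1) := by ring
  have swap := MeasureTheory.integral_integral_swap
    (f := fun x t : ℝ => t ^ (-a) * Real.exp (-(x*t)) * Real.sin (ω*x)) hprod
  have lhs_eq : (∫ x in Ioc (0:ℝ) 1, ∫ t in Ioi (0:ℝ),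
        t ^ (-a) * Real.exp (-(x*t)) * Real.sin (ω*x))
      = Real.Gamma (1-a) * (∫ x in (0:ℝ)..1, x ^ (a-1) * Real.sin (ω*x)) := by
    rw [intervalIntegral.integral_of_le zero_le_one, ← MeasureTheory.integral_const_mul]
    refine setIntegral_congr_fun measurableSet_Ioc (fun x hx => ?_)
    rw [MeasureTheory.integral_mul_const, hval x hx.1]
    ring
  have rhs_eq : (∫ t in Ioi (0:ℝ), ∫ x in Ioc (0:ℝ) 1,
        t ^ (-a) * Real.exp (-(x*t)) * Real.sin (ω*x))
      = ∫ t in Ioi (0:ℝ), t ^ (-a) *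
          ((ω - Real.exp (-t) * (ω * Real.cos ω + t * Real.sin ω)) / (t^2 + ω^2)) := by
    refine setIntegral_congr_fun measurableSet_Ioi (fun t ht => ?_)
    rw [show (∫ x in Ioc (0:ℝ) 1, t ^ (-a) * Real.exp (-(x*t)) * Real.sin (ω*x))
        = ∫ x in Ioc (0:ℝ) 1, t ^ (-a) * (Real.exp (-(t*x)) * Real.sin (ω*x)) from
      setIntegral_congr_fun measurableSet_Ioc (fun x hx => by rw [mul_assoc, mul_comm x t])]
    rw [MeasureTheory.integral_const_mul, ← intervalIntegral.integral_of_le zero_le_one,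
      hinner t]
  rw [← lhs_eq, swap, rhs_eq]

lemma aux_Kval {a : ℝ} (ha : 0 < a) (ha1 : a < 1)
    (hK2 : ∫ u in Ioi (0:ℝ), u ^ (-a) * (1+u^2)⁻¹
      = Real.Gamma ((1-a)/2) * Real.Gamma ((1+a)/2) / 2) :
    ∫ u in Ioi (0:ℝ), u ^ (-a) * (1+u^2)⁻¹
      = Real.Gamma a * Real.Gamma (1-a) * Real.sin (π*a/2) := by
  rw [hK2]
  have hπ := Real.pi_pos
  have hcos : 0 < Real.cos (π*a/2) := by
    apply Real.cos_pos_of_mem_Ioo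
    constructor <;> nlinarith
  have hsin : 0 < Real.sin (π*a/2) := by
    apply Real.sin_pos_of_pos_of_lt_pi <;> nlinarith
  have h1 := Real.Gamma_mul_Gamma_one_sub ((1-a)/2)
  rw [show 1-(1-a)/2 = (1+a)/2 by ring,
    show π*((1-a)/2) = π/2 - π*a/2 by ring, Real.sin_pi_div_two_sub] at h1
  have h2 := Real.Gamma_mul_Gamma_one_sub a
  rw [show π*a = 2*(π*a/2) by ring, Real.sin_two_mul] at h2
  have hsin2 : Real.sin (π*a/2) * Real.cos (π*a/2) ≠ 0 := by positivity
  field_simp at h1 h2 ⊢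
  rw [h1, h2]
  field_simp


theorem stmt_5 (a : ℝ) (ha : a ∈ Set.Ioo (0:ℝ) 1) :
    ∃ C > (0:ℝ), ∀ ω : ℝ, 1 ≤ ω →
      |(∫ x in (0:ℝ)..1, x ^ (a - 1) * Real.sin (ω * x)) -
        Real.Gamma a * Real.sin (Real.pi * a / 2) / ω ^ a + Real.cos ω / ω| ≤ C / ω ^ 2 := by
  obtain ⟨ha0, ha1⟩ := ha
  have h1a : (0:ℝ) < 1-a := by linarith
  have hG1 : 0 < Real.Gamma (1-a) := Real.Gamma_pos_of_pos h1a
  have hG2 : 0 < Real.Gamma (2-a) := Real.Gamma_pos_of_pos (by linarith)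
  have hG3 : 0 < Real.Gamma (3-a) := Real.Gamma_pos_of_pos (by linarith)
  refine ⟨(Real.Gamma (3-a) + Real.Gamma (2-a)) / Real.Gamma (1-a), by positivity, ?_⟩
  intro ω hω
  have hω0 : (0:ℝ) < ω := by linarith
  have hFub := aux_F ha0 ha1 hω0 (fun t => aux_inner hω0)
    (fun x hx => aux_int_exp ha0 ha1 hx)
  -- integrabilities
  have mneg : Measurable fun t : ℝ => Real.exp (-t) := Real.measurable_exp.comp measurable_neg
  have mrp : Measurable fun t : ℝ => t ^ (-a) := by measurability
  have hmB : AEStronglyMeasurable (fun t : ℝ => t ^ (-a) * Real.exp (-t) * (ω/(t^2+ω^2)))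
      (volume.restrict (Ioi (0:ℝ))) :=
    ((mrp.mul mneg).mul (by measurability)).aestronglyMeasurable
  have hmC : AEStronglyMeasurable (fun t : ℝ => t ^ (-a) * Real.exp (-t) * (t/(t^2+ω^2)))
      (volume.restrict (Ioi (0:ℝ))) :=
    ((mrp.mul mneg).mul (by measurability)).aestronglyMeasurable
  have hmA : AEStronglyMeasurable (fun t : ℝ => t ^ (-a) * Real.exp (-t) * (1/ω))
      (volume.restrict (Ioi (0:ℝ))) :=
    ((mrp.mul mneg).mul (by measurability)).aestronglyMeasurable
  have hmD : AEStronglyMeasurable (fun t : ℝ => t ^ (-a) * Real.exp (-t) * (t^2/(ω*(t^2+ω^2))))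
      (volume.restrict (Ioi (0:ℝ))) :=
    ((mrp.mul mneg).mul (by measurability)).aestronglyMeasurable
  have hPint := aux_intP ha0 ha1 hω
  have hBint : IntegrableOn (fun t : ℝ => t ^ (-a) * Real.exp (-t) * (ω/(t^2+ω^2))) (Ioi 0) := by
    refine aux_dom h1a hmB (fun t ht => ?_)
    have ht0 : (0:ℝ) < t := ht
    have hden : (0:ℝ) < t^2+ω^2 := by positivity
    rw [show (1:ℝ)-a-1 = -a by ring, Real.norm_eq_abs,
      abs_of_nonneg (by positivity : (0:ℝ) ≤ t ^ (-a) * Real.exp (-t) * (ω/(t^2+ω^2)))]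
    calc t ^ (-a) * Real.exp (-t) * (ω/(t^2+ω^2))
        ≤ t ^ (-a) * Real.exp (-t) * 1 := by
          gcongr
          rw [div_le_one hden]; nlinarith
      _ = Real.exp (-t) * t ^ (-a) := by ring
  have hCint : IntegrableOn (fun t : ℝ => t ^ (-a) * Real.exp (-t) * (t/(t^2+ω^2))) (Ioi 0) := by
    refine aux_dom (by linarith : (0:ℝ) < 2-a) hmC (fun t ht => ?_)
    have ht0 : (0:ℝ) < t := ht
    have hden : (0:ℝ) < t^2+ω^2 := by positivity
    have htt : t ^ (-a) * t = t ^ ((1:ℝ)-a) := by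
      rw [show (1:ℝ)-a = -a+1 by ring, Real.rpow_add ht0, Real.rpow_one]
    rw [Real.norm_eq_abs,
      abs_of_nonneg (by positivity : (0:ℝ) ≤ t ^ (-a) * Real.exp (-t) * (t/(t^2+ω^2)))]
    calc t ^ (-a) * Real.exp (-t) * (t/(t^2+ω^2))
        ≤ t ^ (-a) * Real.exp (-t) * t := by
          gcongr
          rw [div_le_iff₀ hden]
          have hω2 : (1:ℝ) ≤ ω^2 := by nlinarith
          nlinarith [mul_nonneg ht0.le (by nlinarith : (0:ℝ) ≤ t^2+ω^2-1)]
      _ = Real.exp (-t) * (t ^ (-a) * t) := by ring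
      _ = Real.exp (-t) * t ^ ((2:ℝ)-a-1) := by rw [htt, show (2:ℝ)-a-1 = 1-a by ring]
  have hAint : IntegrableOn (fun t : ℝ => t ^ (-a) * Real.exp (-t) * (1/ω)) (Ioi 0) := by
    refine aux_dom h1a hmA (fun t ht => ?_)
    have ht0 : (0:ℝ) < t := ht
    rw [show (1:ℝ)-a-1 = -a by ring, Real.norm_eq_abs,
      abs_of_nonneg (by positivity : (0:ℝ) ≤ t ^ (-a) * Real.exp (-t) * (1/ω))]
    calc t ^ (-a) * Real.exp (-t) * (1/ω) ≤ t ^ (-a) * Real.exp (-t) * 1 := by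
          gcongr
          rw [div_le_one hω0]; linarith
      _ = Real.exp (-t) * t ^ (-a) := by ring
  have hDint : IntegrableOn (fun t : ℝ => t ^ (-a) * Real.exp (-t) * (t^2/(ω*(t^2+ω^2)))) (Ioi 0) := by
    refine aux_dom (by linarith : (0:ℝ) < 3-a) hmD (fun t ht => ?_)
    have ht0 : (0:ℝ) < t := ht
    have hden : (0:ℝ) < ω*(t^2+ω^2) := by positivity
    have htt : t ^ (-a) * t^2 = t ^ ((2:ℝ)-a) := by
      rw [← Real.rpow_natCast t 2, ← Real.rpow_add ht0]
      push_cast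
      congr 1
      ring
    rw [Real.norm_eq_abs,
      abs_of_nonneg (by positivity : (0:ℝ) ≤ t ^ (-a) * Real.exp (-t) * (t^2/(ω*(t^2+ω^2))))]
    calc t ^ (-a) * Real.exp (-t) * (t^2/(ω*(t^2+ω^2)))
        ≤ t ^ (-a) * Real.exp (-t) * t^2 := by
          gcongr
          rw [div_le_iff₀ hden]
          have h9 : (1:ℝ) ≤ ω*(t^2+ω^2) := by nlinarith
          nlinarith [mul_le_mul_of_nonneg_left h9 (sq_nonneg t)]
      _ = Real.exp (-t) * (t ^ (-a) * t^2) := by ring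
      _ = Real.exp (-t) * t ^ ((3:ℝ)-a-1) := by rw [htt, show (3:ℝ)-a-1 = 2-a by ring]
  -- split the integral
  have e1 : (fun t : ℝ => t ^ (-a) *
        ((ω - Real.exp (-t) * (ω * Real.cos ω + t * Real.sin ω)) / (t^2 + ω^2)))
      = fun t : ℝ => t ^ (-a) * (ω/(t^2+ω^2))
          - (Real.cos ω * (t ^ (-a) * Real.exp (-t) * (ω/(t^2+ω^2)))
             + Real.sin ω * (t ^ (-a) * Real.exp (-t) * (t/(t^2+ω^2)))) := by
    funext t
    have hden : (t:ℝ)^2+ω^2 ≠ 0 := by positivity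
    field_simp
  have hsub : (∫ t in Ioi (0:ℝ), t ^ (-a) *
        ((ω - Real.exp (-t) * (ω * Real.cos ω + t * Real.sin ω)) / (t^2 + ω^2)))
      = (∫ t in Ioi (0:ℝ), t ^ (-a) * (ω/(t^2+ω^2)))
        - (Real.cos ω * (∫ t in Ioi (0:ℝ), t ^ (-a) * Real.exp (-t) * (ω/(t^2+ω^2)))
           + Real.sin ω * (∫ t in Ioi (0:ℝ), t ^ (-a) * Real.exp (-t) * (t/(t^2+ω^2)))) := by
    rw [show (∫ t in Ioi (0:ℝ), t ^ (-a) *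
        ((ω - Real.exp (-t) * (ω * Real.cos ω + t * Real.sin ω)) / (t^2 + ω^2)))
      = ∫ t in Ioi (0:ℝ), (t ^ (-a) * (ω/(t^2+ω^2))
          - (Real.cos ω * (t ^ (-a) * Real.exp (-t) * (ω/(t^2+ω^2)))
             + Real.sin ω * (t ^ (-a) * Real.exp (-t) * (t/(t^2+ω^2))))) by rw [e1]]
    have hq1 : Integrable (fun t : ℝ => Real.cos ω * (t ^ (-a) * Real.exp (-t) * (ω/(t^2+ω^2))))
        (volume.restrict (Ioi 0)) := hBint.const_mul _
    have hq2 : Integrable (fun t : ℝ => Real.sin ω * (t ^ (-a) * Real.exp (-t) * (t/(t^2+ω^2))))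
        (volume.restrict (Ioi 0)) := hCint.const_mul _
    have hq : Integrable (fun t : ℝ => Real.cos ω * (t ^ (-a) * Real.exp (-t) * (ω/(t^2+ω^2)))
        + Real.sin ω * (t ^ (-a) * Real.exp (-t) * (t/(t^2+ω^2))))
        (volume.restrict (Ioi 0)) := hq1.add hq2
    rw [integral_sub hPint hq, integral_add hq1 hq2,
      integral_const_mul, integral_const_mul]
  -- value of the P integral
  have hPval : (∫ t in Ioi (0:ℝ), t ^ (-a) * (ω/(t^2+ω^2)))
      = ω ^ (-a) * (Real.Gamma a * Real.Gamma (1-a) * Real.sin (π*a/2)) := by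
    have hKv := aux_Kval ha0 ha1
      (aux_K ha0 ha1 (aux_intK ha0 ha1) (fun s hs => aux_gauss ha0 ha1 hs))
    have hsub2 := MeasureTheory.integral_comp_mul_left_Ioi
      (fun t : ℝ => t ^ (-a) * (ω/(t^2+ω^2))) 0 hω0
    rw [mul_zero] at hsub2
    have hcong : (∫ x in Ioi (0:ℝ), (fun t : ℝ => t ^ (-a) * (ω/(t^2+ω^2))) (ω*x))
        = ∫ x in Ioi (0:ℝ), (ω ^ (-a) * ω⁻¹) * (x ^ (-a) * (1+x^2)⁻¹) := by
      refine setIntegral_congr_fun measurableSet_Ioi (fun u hu => ?_)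
      have hu0 : (0:ℝ) < u := hu
      simp only
      rw [Real.mul_rpow hω0.le hu0.le]
      have hd : (ω*u)^2+ω^2 ≠ 0 := by positivity
      have h2 : (1:ℝ)+u^2 ≠ 0 := by positivity
      have hwa : (0:ℝ) < ω ^ (-a) := Real.rpow_pos_of_pos hω0 _
      field_simp
      ring
    rw [hcong, MeasureTheory.integral_const_mul, hKv, smul_eq_mul] at hsub2
    have h6 : (∫ t in Ioi (0:ℝ), t ^ (-a) * (ω/(t^2+ω^2)))
        = ω * (ω⁻¹ * ∫ t in Ioi (0:ℝ), t ^ (-a) * (ω/(t^2+ω^2))) := by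
      rw [← mul_assoc, mul_inv_cancel₀ hω0.ne', one_mul]
    rw [h6, ← hsub2]
    field_simp
  -- value of the A integral
  have hAval : (∫ t in Ioi (0:ℝ), t ^ (-a) * Real.exp (-t) * (1/ω))
      = Real.Gamma (1-a) * (1/ω) := by
    rw [show (∫ t in Ioi (0:ℝ), t ^ (-a) * Real.exp (-t) * (1/ω))
        = ∫ t in Ioi (0:ℝ), (Real.exp (-t) * t ^ ((1:ℝ)-a-1)) * (1/ω) from
      setIntegral_congr_fun measurableSet_Ioi (fun t ht => by
        rw [show (1:ℝ)-a-1 = -a by ring]; ring)]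
    rw [MeasureTheory.integral_mul_const, ← Real.Gamma_eq_integral h1a]
  -- D = A - B
  have hDval : (∫ t in Ioi (0:ℝ), t ^ (-a) * Real.exp (-t) * (t^2/(ω*(t^2+ω^2))))
      = Real.Gamma (1-a) * (1/ω)
        - ∫ t in Ioi (0:ℝ), t ^ (-a) * Real.exp (-t) * (ω/(t^2+ω^2)) := by
    rw [show (∫ t in Ioi (0:ℝ), t ^ (-a) * Real.exp (-t) * (t^2/(ω*(t^2+ω^2))))
        = ∫ t in Ioi (0:ℝ), (t ^ (-a) * Real.exp (-t) * (1/ω)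
            - t ^ (-a) * Real.exp (-t) * (ω/(t^2+ω^2))) from
      setIntegral_congr_fun measurableSet_Ioi (fun t ht => by
        have hden : (t:ℝ)^2+ω^2 ≠ 0 := by positivity
        field_simp
        ring)]
    rw [integral_sub hAint hBint, hAval]
  -- the key identity
  have hωa : Real.Gamma a * Real.sin (π*a/2) / ω ^ a
      = Real.Gamma a * Real.sin (π*a/2) * ω ^ (-a) := by
    rw [Real.rpow_neg hω0.le]; ring
  have hGE : Real.Gamma (1-a) * ((∫ x in (0:ℝ)..1, x ^ (a-1) * Real.sin (ω*x))
        - Real.Gamma a * Real.sin (π*a/2) / ω ^ a + Real.cos ω / ω)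
      = Real.cos ω * (∫ t in Ioi (0:ℝ), t ^ (-a) * Real.exp (-t) * (t^2/(ω*(t^2+ω^2))))
        - Real.sin ω * (∫ t in Ioi (0:ℝ), t ^ (-a) * Real.exp (-t) * (t/(t^2+ω^2))) := by
    rw [hωa]
    have h1 := hFub
    rw [hsub, hPval] at h1
    linear_combination h1 - Real.cos ω * hDval
  -- bounds
  have hb1 : |∫ t in Ioi (0:ℝ), t ^ (-a) * Real.exp (-t) * (t^2/(ω*(t^2+ω^2)))|
      ≤ Real.Gamma (3-a) * (1/ω^2) := by
    have hbd := MeasureTheory.norm_integral_le_of_norm_le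
      (f := fun t : ℝ => t ^ (-a) * Real.exp (-t) * (t^2/(ω*(t^2+ω^2))))
      (g := fun t : ℝ => (Real.exp (-t) * t ^ ((3:ℝ)-a-1)) * (1/ω^2))
      ((Real.GammaIntegral_convergent (by linarith : (0:ℝ) < 3-a)).mul_const _) ?_
    · rw [Real.norm_eq_abs] at hbd
      rwa [MeasureTheory.integral_mul_const, ← Real.Gamma_eq_integral
        (by linarith : (0:ℝ) < 3-a)] at hbd
    · filter_upwards [ae_restrict_mem measurableSet_Ioi] with t ht
      have ht0 : (0:ℝ) < t := ht
      have hden : (0:ℝ) < ω*(t^2+ω^2) := by positivity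
      have htt : t ^ (-a) * t^2 = t ^ ((2:ℝ)-a) := by
        rw [← Real.rpow_natCast t 2, ← Real.rpow_add ht0]
        push_cast
        congr 1
        ring
      rw [Real.norm_eq_abs,
        abs_of_nonneg (by positivity : (0:ℝ) ≤ t ^ (-a) * Real.exp (-t) * (t^2/(ω*(t^2+ω^2))))]
      calc t ^ (-a) * Real.exp (-t) * (t^2/(ω*(t^2+ω^2)))
          ≤ t ^ (-a) * Real.exp (-t) * (t^2/ω^2) := by
            gcongr
            nlinarith
        _ = (Real.exp (-t) * t ^ ((3:ℝ)-a-1)) * (1/ω^2) := by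
            rw [show (3:ℝ)-a-1 = 2-a by ring, ← htt]; ring
  have hb2 : |∫ t in Ioi (0:ℝ), t ^ (-a) * Real.exp (-t) * (t/(t^2+ω^2))|
      ≤ Real.Gamma (2-a) * (1/ω^2) := by
    have hbd := MeasureTheory.norm_integral_le_of_norm_le
      (f := fun t : ℝ => t ^ (-a) * Real.exp (-t) * (t/(t^2+ω^2)))
      (g := fun t : ℝ => (Real.exp (-t) * t ^ ((2:ℝ)-a-1)) * (1/ω^2))
      ((Real.GammaIntegral_convergent (by linarith : (0:ℝ) < 2-a)).mul_const _) ?_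
    · rw [Real.norm_eq_abs] at hbd
      rwa [MeasureTheory.integral_mul_const, ← Real.Gamma_eq_integral
        (by linarith : (0:ℝ) < 2-a)] at hbd
    · filter_upwards [ae_restrict_mem measurableSet_Ioi] with t ht
      have ht0 : (0:ℝ) < t := ht
      have hden : (0:ℝ) < t^2+ω^2 := by positivity
      have htt : t ^ (-a) * t = t ^ ((1:ℝ)-a) := by
        rw [show (1:ℝ)-a = -a+1 by ring, Real.rpow_add ht0, Real.rpow_one]
      rw [Real.norm_eq_abs,
        abs_of_nonneg (by positivity : (0:ℝ) ≤ t ^ (-a) * Real.exp (-t) * (t/(t^2+ω^2)))]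
      calc t ^ (-a) * Real.exp (-t) * (t/(t^2+ω^2))
          ≤ t ^ (-a) * Real.exp (-t) * (t/ω^2) := by
            gcongr
            nlinarith
        _ = (Real.exp (-t) * t ^ ((2:ℝ)-a-1)) * (1/ω^2) := by
            rw [show (2:ℝ)-a-1 = 1-a by ring, ← htt]; ring
  -- combine
  have habs : Real.Gamma (1-a) * |(∫ x in (0:ℝ)..1, x ^ (a-1) * Real.sin (ω*x))
        - Real.Gamma a * Real.sin (π*a/2) / ω ^ a + Real.cos ω / ω|
      ≤ (Real.Gamma (3-a) + Real.Gamma (2-a)) * (1/ω^2) := by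
    rw [← abs_of_pos hG1, ← abs_mul, hGE]
    calc |Real.cos ω * (∫ t in Ioi (0:ℝ), t ^ (-a) * Real.exp (-t) * (t^2/(ω*(t^2+ω^2))))
          - Real.sin ω * (∫ t in Ioi (0:ℝ), t ^ (-a) * Real.exp (-t) * (t/(t^2+ω^2)))|
        ≤ |Real.cos ω * (∫ t in Ioi (0:ℝ), t ^ (-a) * Real.exp (-t) * (t^2/(ω*(t^2+ω^2))))|
          + |Real.sin ω * (∫ t in Ioi (0:ℝ), t ^ (-a) * Real.exp (-t) * (t/(t^2+ω^2)))| := by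
          rw [sub_eq_add_neg]
          exact (abs_add_le _ _).trans (by rw [abs_neg])
      _ ≤ |∫ t in Ioi (0:ℝ), t ^ (-a) * Real.exp (-t) * (t^2/(ω*(t^2+ω^2)))|
          + |∫ t in Ioi (0:ℝ), t ^ (-a) * Real.exp (-t) * (t/(t^2+ω^2))| := by
          refine add_le_add ?_ ?_
          · rw [abs_mul]
            exact mul_le_of_le_one_left (abs_nonneg _) (Real.abs_cos_le_one ω)
          · rw [abs_mul]
            exact mul_le_of_le_one_left (abs_nonneg _) (Real.abs_sin_le_one ω)
      _ ≤ Real.Gamma (3-a) * (1/ω^2) + Real.Gamma (2-a) * (1/ω^2) := add_le_add hb1 hb2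
      _ = (Real.Gamma (3-a) + Real.Gamma (2-a)) * (1/ω^2) := by ring
  have h7 := mul_le_mul_of_nonneg_right habs (sq_nonneg ω)
  have h8 : (Real.Gamma (3-a) + Real.Gamma (2-a)) * (1/ω^2) * ω^2
      = Real.Gamma (3-a) + Real.Gamma (2-a) := by field_simp
  rw [div_div, le_div_iff₀ (by positivity : (0:ℝ) < Real.Gamma (1-a) * ω^2)]
  nlinarith [h7, h8]
end

section
/- For H ∈ (1/2, 1) and positive reals n*, m*, the double integral ∫₀¹∫₀¹ 2[x^{2H} + y^{2H} − ((x+y)^{2H} + |x−y|^{2H})/2] sin(n*x) sin(m*y) dx dy, where n* = (n+1/2)π and m* = (m+1/2)π with n, m nonnegative integers, equals (2H(2H−1)/(n* m*)) ∫₀¹∫₀¹ (|x−y|^{2H−2} − (x+y)^{2H−2}) cos(n*x) cos(m*y) dx dy. -/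
open Real MeasureTheory Set intervalIntegral

/-- Continuity of `x ↦ x ^ q` for positive real exponent. -/
lemma contRpow {q : ℝ} (hq : 0 < q) : Continuous fun x : ℝ => x ^ q :=
  continuous_iff_continuousAt.2 fun x => Real.continuousAt_rpow_const x q (Or.inr hq.le)

/-- Continuity of the signed power `u ↦ u * |u| ^ e` for `-1 < e`. -/
lemma contSp {e : ℝ} (he : -1 < e) : Continuous fun u : ℝ => u * |u| ^ e := by
  rw [continuous_iff_continuousAt]
  intro x
  rcases eq_or_ne x 0 with rfl | hx
  · have hb : ∀ u : ℝ, ‖u * |u| ^ e‖ ≤ |u| ^ (e + 1) := by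
      intro u
      rcases eq_or_ne u 0 with rfl | hu
      · simp [Real.zero_rpow (by linarith : e + 1 ≠ 0)]
      · have : |u| ^ (e + 1) = |u| ^ e * |u| := Real.rpow_add_one (abs_ne_zero.2 hu) e
        rw [Real.norm_eq_abs, abs_mul, abs_rpow_of_nonneg (abs_nonneg u), abs_abs, this]
        ring_nf; exact le_refl _
    have ht : Filter.Tendsto (fun u : ℝ => |u| ^ (e + 1)) (nhds 0) (nhds 0) := by
      have := ((contRpow (by linarith : (0:ℝ) < e + 1)).comp continuous_abs).tendsto 0
      simpa [Function.comp_def, Real.zero_rpow (by linarith : e + 1 ≠ 0)] using this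
    have := squeeze_zero_norm hb ht
    unfold ContinuousAt
    simpa using this
  · exact (continuousAt_id.mul (((Real.continuousAt_rpow_const _ e
      (Or.inl (abs_ne_zero.2 hx))).comp continuous_abs.continuousAt)))

/-- Derivative of the signed power `u ↦ u * |u| ^ (p-2)` away from `0`. -/
lemma hasDerivAt_sp {p : ℝ} (hp : 1 ≤ p) {u : ℝ} (hu : u ≠ 0) :
    HasDerivAt (fun u : ℝ => u * |u| ^ (p - 2)) ((p - 1) * |u| ^ (p - 2)) u := by
  rcases hu.lt_or_gt with hneg | hpos
  · have h1 : HasDerivAt (fun v : ℝ => -((-v) ^ (p - 1)))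
        (-((p - 1) * (-u) ^ (p - 1 - 1) * (-1))) u :=
      (((Real.hasDerivAt_rpow_const (p := p - 1)
        (Or.inl (by intro h; apply hneg.ne; linarith : -u ≠ 0))).comp u (hasDerivAt_neg u))).neg
    have heq : (fun v : ℝ => v * |v| ^ (p - 2)) =ᶠ[nhds u] fun v : ℝ => -((-v) ^ (p - 1)) := by
      filter_upwards [Iio_mem_nhds hneg] with v hv
      have hv' : v < 0 := hv
      rw [abs_of_neg hv', show p - 1 = (p - 2) + 1 by ring,
        Real.rpow_add_one (by intro h; apply hv'.ne; linarith : -v ≠ 0)]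
      ring
    have h2 := h1.congr_of_eventuallyEq heq
    refine h2.congr_deriv ?_
    rw [abs_of_neg hneg, show p - 1 - 1 = p - 2 by ring]
    ring
  · have h1 : HasDerivAt (fun v : ℝ => v ^ (p - 1)) ((p - 1) * u ^ (p - 1 - 1)) u :=
      Real.hasDerivAt_rpow_const (Or.inl hpos.ne')
    have heq : (fun v : ℝ => v * |v| ^ (p - 2)) =ᶠ[nhds u] fun v : ℝ => v ^ (p - 1) := by
      filter_upwards [Ioi_mem_nhds hpos] with v hv
      have hv' : (0:ℝ) < v := hv
      rw [abs_of_pos hv', show p - 1 = (p - 2) + 1 by ring, Real.rpow_add_one hv'.ne']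
      ring
    have h2 := h1.congr_of_eventuallyEq heq
    refine h2.congr_deriv ?_
    rw [abs_of_pos hpos, show p - 1 - 1 = p - 2 by ring]

/-- Fundamental theorem of calculus on `[0,1]` allowing one bad point `c`. -/
lemma ftc_split (Φ φ : ℝ → ℝ) (c : ℝ) (hc : c ∈ Set.Icc (0:ℝ) 1)
    (hcont : ContinuousOn Φ (Set.Icc 0 1))
    (hderiv : ∀ x ∈ Set.Ioo (0:ℝ) 1, x ≠ c → HasDerivAt Φ (φ x) x)
    (hint : IntervalIntegrable φ volume 0 1) :
    ∫ x in (0:ℝ)..1, φ x = Φ 1 - Φ 0 := by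
  have hsub1 : Set.uIcc (0:ℝ) c ⊆ Set.uIcc (0:ℝ) 1 := by
    rw [uIcc_of_le hc.1, uIcc_of_le (by norm_num : (0:ℝ) ≤ 1)]
    exact Icc_subset_Icc le_rfl hc.2
  have hsub2 : Set.uIcc c (1:ℝ) ⊆ Set.uIcc (0:ℝ) 1 := by
    rw [uIcc_of_le hc.2, uIcc_of_le (by norm_num : (0:ℝ) ≤ 1)]
    exact Icc_subset_Icc hc.1 le_rfl
  have h1 : IntervalIntegrable φ volume 0 c := hint.mono_set hsub1
  have h2 : IntervalIntegrable φ volume c 1 := hint.mono_set hsub2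
  have e1 : ∫ x in (0:ℝ)..c, φ x = Φ c - Φ 0 :=
    integral_eq_sub_of_hasDeriv_right_of_le hc.1
      (hcont.mono (Icc_subset_Icc le_rfl hc.2))
      (fun x hx => (hderiv x ⟨hx.1, lt_of_lt_of_le hx.2 hc.2⟩ hx.2.ne).hasDerivWithinAt) h1
  have e2 : ∫ x in c..(1:ℝ), φ x = Φ 1 - Φ c :=
    integral_eq_sub_of_hasDeriv_right_of_le hc.2
      (hcont.mono (Icc_subset_Icc hc.1 le_rfl))
      (fun x hx => (hderiv x ⟨lt_of_le_of_lt hc.1 hx.1, hx.2⟩ hx.1.ne').hasDerivWithinAt) h2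
  rw [← integral_add_adjacent_intervals h1 h2, e1, e2]
  ring

/-- Fubini for a globally continuous function on `[0,1]²`. -/
lemma fubini01 (F : ℝ → ℝ → ℝ) (hF : Continuous (Function.uncurry F)) :
    ∫ x in (0:ℝ)..1, ∫ y in (0:ℝ)..1, F x y = ∫ y in (0:ℝ)..1, ∫ x in (0:ℝ)..1, F x y := by
  have h01 : (0:ℝ) ≤ 1 := by norm_num
  have hint : Integrable (Function.uncurry F)
      ((volume.restrict (Ioc (0:ℝ) 1)).prod (volume.restrict (Ioc (0:ℝ) 1))) := by
    rw [Measure.prod_restrict]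
    apply (hF.continuousOn.integrableOn_compact (isCompact_Icc.prod isCompact_Icc)).mono_set
    exact Set.prod_mono Ioc_subset_Icc_self Ioc_subset_Icc_self
  have hswap := MeasureTheory.integral_integral_swap hint
  simp only [intervalIntegral.integral_of_le h01]
  exact hswap

noncomputable def Kf (p x y : ℝ) : ℝ :=
  2 * (x ^ p + y ^ p - ((x + y) ^ p + |x - y| ^ p) / 2)

noncomputable def Gx (p x y : ℝ) : ℝ :=
  2 * p * x ^ (p - 1) - p * (x + y) ^ (p - 1) - p * ((x - y) * |x - y| ^ (p - 2))

noncomputable def Gxy (p x y : ℝ) : ℝ :=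
  p * (p - 1) * (|x - y| ^ (p - 2) - (x + y) ^ (p - 2))

lemma contKf {p : ℝ} (hp : 0 < p) : Continuous (Function.uncurry (Kf p)) := by
  unfold Kf Function.uncurry
  fun_prop (disch := positivity)

lemma contGx {p : ℝ} (hp1 : 1 < p) (hp2 : p < 2) :
    Continuous (Function.uncurry (Gx p)) := by
  unfold Gx Function.uncurry
  have h1 : Continuous fun q : ℝ × ℝ => q.1 ^ (p - 1) :=
    (contRpow (by linarith)).comp continuous_fst
  have h2 : Continuous fun q : ℝ × ℝ => (q.1 + q.2) ^ (p - 1) :=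
    (contRpow (by linarith)).comp (continuous_fst.add continuous_snd)
  have h3 : Continuous fun q : ℝ × ℝ => (q.1 - q.2) * |q.1 - q.2| ^ (p - 2) :=
    (contSp (by linarith)).comp (continuous_fst.sub continuous_snd)
  exact ((continuous_const.mul h1).sub (continuous_const.mul h2)).sub (continuous_const.mul h3)

lemma Kf_deriv {p : ℝ} (hp1 : 1 < p) (y : ℝ) (x : ℝ) :
    HasDerivAt (fun x => Kf p x y) (Gx p x y) x := by
  have h1 : HasDerivAt (fun x : ℝ => x ^ p) (p * x ^ (p - 1)) x :=
    Real.hasDerivAt_rpow_const (Or.inr hp1.le)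
  have h2 : HasDerivAt (fun x : ℝ => (x + y) ^ p) (p * (x + y) ^ (p - 1) * 1) x :=
    (Real.hasDerivAt_rpow_const (p := p) (Or.inr hp1.le)).comp x ((hasDerivAt_id x).add_const y)
  have h3 : HasDerivAt (fun x : ℝ => |x - y| ^ p) (p * |x - y| ^ (p - 2) * (x - y) * 1) x :=
    by have := (hasDerivAt_abs_rpow (x - y) hp1).comp x ((hasDerivAt_id x).sub_const y); exact this
  have h : HasDerivAt (fun x => Kf p x y)
      (2 * (p * x ^ (p - 1) - (p * (x + y) ^ (p - 1) * 1 + p * |x - y| ^ (p - 2) * (x - y) * 1) / 2)) x :=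
    ((h1.add_const (y ^ p)).sub ((h2.add h3).div_const 2)).const_mul 2
  convert h using 1
  unfold Gx
  ring

lemma step1 {p a : ℝ} (hp1 : 1 < p) (hp2 : p < 2) (ha : a ≠ 0) (hcos : Real.cos a = 0)
    {y : ℝ} (hy : y ∈ Set.Icc (0:ℝ) 1) :
    ∫ x in (0:ℝ)..1, Kf p x y * Real.sin (a * x)
      = (1/a) * ∫ x in (0:ℝ)..1, Gx p x y * Real.cos (a * x) := by
  have hp0 : (0:ℝ) < p := by linarith
  have hcK : Continuous fun x => Kf p x y :=
    (contKf hp0).comp (continuous_id.prodMk continuous_const)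
  have hcG : Continuous fun x => Gx p x y :=
    (contGx hp1 hp2).comp (continuous_id.prodMk continuous_const)
  have hΦ : ∀ x : ℝ, HasDerivAt (fun x => -Kf p x y * Real.cos (a * x) / a)
      (Kf p x y * Real.sin (a * x) - 1/a * (Gx p x y * Real.cos (a * x))) x := by
    intro x
    have hc : HasDerivAt (fun x : ℝ => Real.cos (a * x)) (-Real.sin (a * x) * (a * 1)) x :=
      (Real.hasDerivAt_cos (a * x)).comp x ((hasDerivAt_id x).const_mul a)
    have h := (((Kf_deriv hp1 y x).neg.mul hc).div_const a)
    refine h.congr_deriv ?_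
    simp only [Pi.neg_apply]
    field_simp
    ring
  have hint : IntervalIntegrable
      (fun x => Kf p x y * Real.sin (a * x) - 1/a * (Gx p x y * Real.cos (a * x)))
      volume 0 1 := by
    apply Continuous.intervalIntegrable
    fun_prop
  have h0 := integral_eq_sub_of_hasDerivAt (fun x _ => hΦ x) hint
  have hK0 : Kf p 0 y = 0 := by
    unfold Kf
    rw [Real.zero_rpow hp0.ne', zero_add, zero_sub, abs_neg, abs_of_nonneg hy.1]
    ring
  rw [mul_one, mul_zero, hcos, hK0, Real.cos_zero] at h0
  norm_num at h0
  have hsub : IntervalIntegrable (fun x => Kf p x y * Real.sin (a * x)) volume 0 1 := by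
    apply Continuous.intervalIntegrable; fun_prop
  have hsub2 : IntervalIntegrable (fun x => a⁻¹ * (Gx p x y * Real.cos (a * x))) volume 0 1 := by
    apply Continuous.intervalIntegrable; fun_prop
  rw [intervalIntegral.integral_sub hsub hsub2, sub_eq_zero,
    intervalIntegral.integral_const_mul] at h0
  rw [one_div]
  exact h0

lemma intAbs {r : ℝ} (hr : -1 < r) {x : ℝ} (hx : x ∈ Set.Icc (0:ℝ) 1) :
    IntervalIntegrable (fun y => |x - y| ^ r) volume 0 1 := by
  have iA : IntervalIntegrable (fun y => (x - y) ^ r) volume 0 x := by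
    have h := ((intervalIntegrable_rpow' (a := 0) (b := x) hr).comp_sub_left x).symm
    simpa using h
  have iB : IntervalIntegrable (fun y => (y - x) ^ r) volume x 1 := by
    have h := (intervalIntegrable_rpow' (a := 0) (b := 1 - x) hr).comp_sub_right x
    simpa using h
  have iA' : IntervalIntegrable (fun y => |x - y| ^ r) volume 0 x := by
    apply iA.congr
    rw [uIoc_of_le hx.1]
    intro y hy; simp only
    rw [abs_of_nonneg (by linarith [hy.2] : (0:ℝ) ≤ x - y)]
  have iB' : IntervalIntegrable (fun y => |x - y| ^ r) volume x 1 := by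
    apply iB.congr
    rw [uIoc_of_le hx.2]
    intro y hy; simp only
    rw [abs_of_nonpos (by linarith [hy.1] : x - y ≤ 0), neg_sub]
  exact iA'.trans iB'

lemma intGxy {p : ℝ} (hp1 : 1 < p) (hp2 : p < 2) {x : ℝ} (hx : x ∈ Set.Icc (0:ℝ) 1) :
    IntervalIntegrable (fun y => Gxy p x y) volume 0 1 := by
  have hr : (-1:ℝ) < p - 2 := by linarith
  have i1 : IntervalIntegrable (fun y => |x - y| ^ (p - 2)) volume 0 1 := intAbs hr hx
  have i2 : IntervalIntegrable (fun y => (x + y) ^ (p - 2)) volume 0 1 := by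
    have h := (intervalIntegrable_rpow' (a := x) (b := 1 + x) hr).comp_sub_right (-x)
    simpa [sub_neg_eq_add, add_comm] using h
  have := ((i1.sub i2).const_mul (p * (p - 1)))
  simpa [Gxy, mul_sub] using this

lemma Gx_deriv {p : ℝ} (hp1 : 1 < p) {x : ℝ} (hx : 0 ≤ x) {y : ℝ} (hy : 0 < y)
    (hxy : y ≠ x) : HasDerivAt (fun y => Gx p x y) (Gxy p x y) y := by
  have hxy0 : x + y ≠ 0 := by positivity
  have h2 : HasDerivAt (fun y : ℝ => (x + y) ^ (p - 1)) ((p - 1) * (x + y) ^ (p - 1 - 1) * 1) y :=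
    (Real.hasDerivAt_rpow_const (p := p - 1) (Or.inl hxy0)).comp y ((hasDerivAt_id y).const_add x)
  have h3 : HasDerivAt (fun y : ℝ => (x - y) * |x - y| ^ (p - 2))
      ((p - 1) * |x - y| ^ (p - 2) * (0 - 1)) y :=
    (hasDerivAt_sp hp1.le (by intro h; exact hxy (by linarith) : x - y ≠ 0)).comp y
      ((hasDerivAt_const y x).sub (hasDerivAt_id y))
  have h : HasDerivAt (fun y => Gx p x y)
      (0 - p * ((p - 1) * (x + y) ^ (p - 1 - 1) * 1) - p * ((p - 1) * |x - y| ^ (p - 2) * (0 - 1))) y :=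
    ((hasDerivAt_const y (2 * p * x ^ (p - 1))).sub (h2.const_mul p)).sub (h3.const_mul p)
  convert h using 1
  unfold Gxy
  rw [show p - 1 - 1 = p - 2 by ring]
  ring

lemma Gx_zero {p : ℝ} (hp1 : 1 < p) {x : ℝ} (hx : 0 ≤ x) : Gx p x 0 = 0 := by
  unfold Gx
  rcases eq_or_lt_of_le hx with rfl | hx'
  · simp [Real.zero_rpow (by linarith : p - 1 ≠ 0)]
  · rw [add_zero, sub_zero, abs_of_pos hx']
    rw [show p - 1 = (p - 2) + 1 by ring, Real.rpow_add_one hx'.ne']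
    ring

lemma step2 {p b : ℝ} (hp1 : 1 < p) (hp2 : p < 2) (hb : b ≠ 0) (hcos : Real.cos b = 0)
    {x : ℝ} (hx : x ∈ Set.Icc (0:ℝ) 1) :
    ∫ y in (0:ℝ)..1, Gx p x y * Real.sin (b * y)
      = (1/b) * ∫ y in (0:ℝ)..1, Gxy p x y * Real.cos (b * y) := by
  have hcG : Continuous fun y => Gx p x y :=
    (contGx hp1 hp2).comp (continuous_const.prodMk continuous_id)
  have hΦcont : ContinuousOn (fun y => -Gx p x y * Real.cos (b * y) / b) (Set.Icc 0 1) := by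
    apply Continuous.continuousOn; fun_prop
  have hderiv : ∀ y ∈ Set.Ioo (0:ℝ) 1, y ≠ x →
      HasDerivAt (fun y => -Gx p x y * Real.cos (b * y) / b)
        (Gx p x y * Real.sin (b * y) - 1/b * (Gxy p x y * Real.cos (b * y))) y := by
    intro y hy hyx
    have hc : HasDerivAt (fun y : ℝ => Real.cos (b * y)) (-Real.sin (b * y) * (b * 1)) y :=
      (Real.hasDerivAt_cos (b * y)).comp y ((hasDerivAt_id y).const_mul b)
    have h := (((Gx_deriv hp1 hx.1 hy.1 hyx).neg.mul hc).div_const b)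
    refine h.congr_deriv ?_
    simp only [Pi.neg_apply]
    field_simp
    ring
  have hiGxy : IntervalIntegrable (fun y => Gxy p x y * Real.cos (b * y)) volume 0 1 :=
    (intGxy hp1 hp2 hx).mul_continuousOn (Continuous.continuousOn (by fun_prop))
  have hi1 : IntervalIntegrable (fun y => Gx p x y * Real.sin (b * y)) volume 0 1 := by
    apply Continuous.intervalIntegrable; fun_prop
  have hi2 : IntervalIntegrable (fun y => 1/b * (Gxy p x y * Real.cos (b * y))) volume 0 1 :=
    hiGxy.const_mul _
  have h0 := ftc_split (fun y => -Gx p x y * Real.cos (b * y) / b)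
    (fun y => Gx p x y * Real.sin (b * y) - 1/b * (Gxy p x y * Real.cos (b * y)))
    x hx hΦcont hderiv (hi1.sub hi2)
  rw [mul_one, mul_zero, hcos, Real.cos_zero, Gx_zero hp1 hx.1] at h0
  norm_num at h0
  rw [intervalIntegral.integral_sub hi1 (by simpa [one_div] using hi2), sub_eq_zero,
    intervalIntegral.integral_const_mul] at h0
  rw [one_div]
  exact h0

theorem stmt_9 (H : ℝ) (hH : H ∈ Set.Ioo (1/2 : ℝ) 1) (n m : ℕ) :
    (∫ x in (0:ℝ)..1, ∫ y in (0:ℝ)..1,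
        2 * (x ^ (2 * H) + y ^ (2 * H) - ((x + y) ^ (2 * H) + |x - y| ^ (2 * H)) / 2) *
          Real.sin (((n : ℝ) + 1/2) * Real.pi * x) * Real.sin (((m : ℝ) + 1/2) * Real.pi * y))
      = 2 * H * (2 * H - 1) / ((((n : ℝ) + 1/2) * Real.pi) * (((m : ℝ) + 1/2) * Real.pi)) *
        ∫ x in (0:ℝ)..1, ∫ y in (0:ℝ)..1,
          (|x - y| ^ (2 * H - 2) - (x + y) ^ (2 * H - 2)) *
            Real.cos (((n : ℝ) + 1/2) * Real.pi * x) * Real.cos (((m : ℝ) + 1/2) * Real.pi * y) := by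
  obtain ⟨hH1, hH2⟩ := hH
  set p : ℝ := 2 * H with hpdef
  have hp1 : 1 < p := by rw [hpdef]; linarith
  have hp2 : p < 2 := by rw [hpdef]; linarith
  have hp0 : (0:ℝ) < p := by linarith
  set a : ℝ := ((n : ℝ) + 1/2) * Real.pi with hadef
  set b : ℝ := ((m : ℝ) + 1/2) * Real.pi with hbdef
  have ha0 : a ≠ 0 := by
    have : (0:ℝ) < a := by
      rw [hadef]; apply mul_pos _ Real.pi_pos; positivity
    exact this.ne'
  have hb0 : b ≠ 0 := by
    have : (0:ℝ) < b := by
      rw [hbdef]; apply mul_pos _ Real.pi_pos; positivity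
    exact this.ne'
  have hcosa : Real.cos a = 0 := by
    rw [hadef, show ((n:ℝ) + 1/2) * Real.pi = Real.pi/2 + (n:ℝ) * Real.pi by ring,
      Real.cos_add]
    simp [Real.sin_nat_mul_pi, Real.cos_nat_mul_two_pi]
  have hcosb : Real.cos b = 0 := by
    rw [hbdef, show ((m:ℝ) + 1/2) * Real.pi = Real.pi/2 + (m:ℝ) * Real.pi by ring,
      Real.cos_add]
    simp [Real.sin_nat_mul_pi]
  have hKq : Continuous (fun q : ℝ × ℝ => Kf p q.1 q.2) := contKf hp0
  have hGq : Continuous (fun q : ℝ × ℝ => Gx p q.1 q.2) := contGx hp1 hp2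
  -- Step A : Fubini on the original integral
  have hA : (∫ x in (0:ℝ)..1, ∫ y in (0:ℝ)..1, Kf p x y * Real.sin (a * x) * Real.sin (b * y))
      = ∫ y in (0:ℝ)..1, ∫ x in (0:ℝ)..1, Kf p x y * Real.sin (a * x) * Real.sin (b * y) := by
    apply fubini01
    exact (hKq.mul (Real.continuous_sin.comp (continuous_const.mul continuous_fst))).mul
      (Real.continuous_sin.comp (continuous_const.mul continuous_snd))
  -- Step B : integration by parts in x
  have hB : (∫ y in (0:ℝ)..1, ∫ x in (0:ℝ)..1, Kf p x y * Real.sin (a * x) * Real.sin (b * y))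
      = ∫ y in (0:ℝ)..1,
          1/a * ((∫ x in (0:ℝ)..1, Gx p x y * Real.cos (a * x)) * Real.sin (b * y)) := by
    apply intervalIntegral.integral_congr
    intro y hy
    rw [Set.uIcc_of_le (by norm_num : (0:ℝ) ≤ 1)] at hy
    simp only
    rw [intervalIntegral.integral_mul_const, step1 hp1 hp2 ha0 hcosa hy]
    ring
  -- pull out 1/a
  have hC : (∫ y in (0:ℝ)..1,
        1/a * ((∫ x in (0:ℝ)..1, Gx p x y * Real.cos (a * x)) * Real.sin (b * y)))
      = 1/a * ∫ y in (0:ℝ)..1,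
          (∫ x in (0:ℝ)..1, Gx p x y * Real.cos (a * x)) * Real.sin (b * y) :=
    intervalIntegral.integral_const_mul _ _
  -- rewrite inner product as a double integral and swap
  have hD : (∫ y in (0:ℝ)..1, (∫ x in (0:ℝ)..1, Gx p x y * Real.cos (a * x)) * Real.sin (b * y))
      = ∫ x in (0:ℝ)..1, ∫ y in (0:ℝ)..1,
          Gx p x y * Real.cos (a * x) * Real.sin (b * y) := by
    rw [show (∫ y in (0:ℝ)..1,
        (∫ x in (0:ℝ)..1, Gx p x y * Real.cos (a * x)) * Real.sin (b * y))
        = ∫ y in (0:ℝ)..1, ∫ x in (0:ℝ)..1,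
            Gx p x y * Real.cos (a * x) * Real.sin (b * y) from
      intervalIntegral.integral_congr fun y hy => by
        rw [intervalIntegral.integral_mul_const]]
    exact (fubini01 (fun x y => Gx p x y * Real.cos (a * x) * Real.sin (b * y)) ((hGq.mul
      (Real.continuous_cos.comp (continuous_const.mul continuous_fst))).mul
      (Real.continuous_sin.comp (continuous_const.mul continuous_snd)))).symm
  -- Step E/F : integration by parts in y, for each x
  have hE : (∫ x in (0:ℝ)..1, ∫ y in (0:ℝ)..1,
        Gx p x y * Real.cos (a * x) * Real.sin (b * y))
      = ∫ x in (0:ℝ)..1, 1/b * (p * (p - 1) *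
          ∫ y in (0:ℝ)..1, (|x - y| ^ (p - 2) - (x + y) ^ (p - 2)) *
            Real.cos (a * x) * Real.cos (b * y)) := by
    apply intervalIntegral.integral_congr
    intro x hx
    rw [Set.uIcc_of_le (by norm_num : (0:ℝ) ≤ 1)] at hx
    simp only
    have e1 : ∀ y : ℝ, Gx p x y * Real.cos (a * x) * Real.sin (b * y)
        = Real.cos (a * x) * (Gx p x y * Real.sin (b * y)) := fun y => by ring
    simp only [e1]
    rw [intervalIntegral.integral_const_mul, step2 hp1 hp2 hb0 hcosb hx]
    have e2 : ∀ y : ℝ, Gxy p x y * Real.cos (b * y)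
        = p * (p - 1) * ((|x - y| ^ (p - 2) - (x + y) ^ (p - 2)) * Real.cos (b * y)) :=
      fun y => by unfold Gxy; ring
    simp only [e2]
    rw [intervalIntegral.integral_const_mul]
    have e3 : ∀ y : ℝ, (|x - y| ^ (p - 2) - (x + y) ^ (p - 2)) * Real.cos (a * x) * Real.cos (b * y)
        = Real.cos (a * x) * ((|x - y| ^ (p - 2) - (x + y) ^ (p - 2)) * Real.cos (b * y)) :=
      fun y => by ring
    simp only [e3]
    rw [intervalIntegral.integral_const_mul]
    ring
  rw [show (∫ x in (0:ℝ)..1, ∫ y in (0:ℝ)..1,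
      2 * (x ^ p + y ^ p - ((x + y) ^ p + |x - y| ^ p) / 2) *
        Real.sin (a * x) * Real.sin (b * y))
      = ∫ x in (0:ℝ)..1, ∫ y in (0:ℝ)..1,
          Kf p x y * Real.sin (a * x) * Real.sin (b * y) from rfl]
  rw [hA, hB, hC, hD, hE, intervalIntegral.integral_const_mul,
    intervalIntegral.integral_const_mul]
  field_simp
end

section
/- For nonnegative integers n ≠ m with n* = (n+1/2)π, m* = (m+1/2)π, the double integral over the triangle {(x,y) : x ≥ 0, y ≥ 0, x + y ≤ 1} of (x+y)^{2H−2} cos(n*x) cos(m*y) (with H ∈ (1/2,1)) equals (1/2)[1/(m*+n*) ∫₀¹ u^{2H−2}(sin(m*u)+sin(n*u)) du + 1/(m*−n*) ∫₀¹ u^{2H−2}(sin(m*u)−sin(n*u)) du]. -/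
open Real MeasureTheory

section AuxStmt10
open intervalIntegral

lemma inner_trig (a b u : ℝ) (h1 : a + b ≠ 0) (h2 : a - b ≠ 0) :
    ∫ y in (0:ℝ)..u, Real.cos (a*(u-y)) * Real.cos (b*y)
      = (1/2) * ((Real.sin (a*u) + Real.sin (b*u))/(a+b)
          + (Real.sin (a*u) - Real.sin (b*u))/(a-b)) := by
  have key : ∀ y : ℝ, HasDerivAt
      (fun y => (1/2) * (-(Real.sin (a*u-(a+b)*y))/(a+b) + -(Real.sin (a*u-(a-b)*y))/(a-b)))
      (Real.cos (a*(u-y)) * Real.cos (b*y)) y := by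
    intro y
    have d1 : HasDerivAt (fun y : ℝ => a*u-(a+b)*y) (-(a+b)) y := by
      simpa using ((hasDerivAt_id y).const_mul (a+b)).const_sub (a*u)
    have d2 : HasDerivAt (fun y : ℝ => a*u-(a-b)*y) (-(a-b)) y := by
      simpa using ((hasDerivAt_id y).const_mul (a-b)).const_sub (a*u)
    have s1 := ((Real.hasDerivAt_sin _).comp y d1).neg.div_const (a+b)
    have s2 := ((Real.hasDerivAt_sin _).comp y d2).neg.div_const (a-b)
    have := ((s1.add s2).const_mul (1/2 : ℝ))
    refine HasDerivAt.congr_deriv this ?_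
    field_simp
    simp [Real.cos_sub, Real.cos_add, Real.sin_add, Real.sin_sub, mul_sub, sub_mul, add_mul, mul_add]
    ring
  have := intervalIntegral.integral_eq_sub_of_hasDerivAt (a := (0:ℝ)) (b := u)
    (f := fun y => (1/2) * (-(Real.sin (a*u-(a+b)*y))/(a+b) + -(Real.sin (a*u-(a-b)*y))/(a-b)))
    (fun y _ => key y) (by apply Continuous.intervalIntegrable; fun_prop)
  rw [this]
  have e1 : a*u-(a+b)*u = -(b*u) := by ring
  have e2 : a*u-(a-b)*u = b*u := by ring
  rw [e1, e2]
  simp only [mul_zero, sub_zero, Real.sin_neg]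
  field_simp
  ring

noncomputable def shearEquiv : (ℝ × ℝ) ≃ᵐ (ℝ × ℝ) where
  toFun := fun z => (z.1 - z.2, z.2)
  invFun := fun z => (z.1 + z.2, z.2)
  left_inv := fun z => by simp
  right_inv := fun z => by simp
  measurable_toFun := by measurability
  measurable_invFun := by measurability

lemma shear_mp : MeasurePreserving (fun z : ℝ × ℝ => (z.1 - z.2, z.2)) volume volume := by
  rw [MeasureTheory.Measure.volume_eq_prod]
  exact measurePreserving_sub_prod volume volume

lemma main_aux (r a b : ℝ) (hr : -1 < r) :
    ∫ p in {p : ℝ × ℝ | 0 ≤ p.1 ∧ 0 ≤ p.2 ∧ p.1 + p.2 ≤ 1},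
        (p.1 + p.2) ^ r * Real.cos (a * p.1) * Real.cos (b * p.2)
      = ∫ u in (0:ℝ)..1, u ^ r * ∫ y in (0:ℝ)..u, Real.cos (a*(u-y)) * Real.cos (b*y) := by
  set S : Set (ℝ × ℝ) := {p : ℝ × ℝ | 0 ≤ p.1 ∧ 0 ≤ p.2 ∧ p.1 + p.2 ≤ 1} with hS
  set T : Set (ℝ × ℝ) := {p : ℝ × ℝ | 0 ≤ p.2 ∧ p.2 ≤ p.1 ∧ p.1 ≤ 1} with hTdef
  have hT : MeasurableSet T := by
    apply MeasurableSet.inter (measurableSet_le measurable_const measurable_snd)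
    exact MeasurableSet.inter (measurableSet_le measurable_snd measurable_fst)
      (measurableSet_le measurable_fst measurable_const)
  have himg : (fun z : ℝ × ℝ => (z.1 - z.2, z.2)) '' T = S := by
    ext p
    constructor
    · rintro ⟨q, ⟨hq1, hq2, hq3⟩, rfl⟩
      exact ⟨by simpa using hq2, hq1, by simpa using hq3⟩
    · rintro ⟨h1, h2, h3⟩
      exact ⟨(p.1 + p.2, p.2), ⟨h2, by simpa using h1, h3⟩, by simp⟩
  set F : ℝ × ℝ → ℝ := fun p => (p.1 + p.2) ^ r * Real.cos (a * p.1) * Real.cos (b * p.2) with hF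
  have hemb : MeasurableEmbedding (fun z : ℝ × ℝ => (z.1 - z.2, z.2)) :=
    shearEquiv.measurableEmbedding
  have step1 : ∫ p in S, F p = ∫ p in T, F (p.1 - p.2, p.2) := by
    rw [← himg]
    exact shear_mp.setIntegral_image_emb hemb F T
  rw [step1]
  set G : ℝ × ℝ → ℝ := fun p => p.1 ^ r * Real.cos (a * (p.1 - p.2)) * Real.cos (b * p.2) with hG
  have hFG : ∀ p : ℝ × ℝ, F (p.1 - p.2, p.2) = G p := by
    intro p; simp only [hF, hG]; ring_nf
  have step2 : ∫ p in T, F (p.1 - p.2, p.2) = ∫ p in T, G p := by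
    exact integral_congr_ae (Filter.Eventually.of_forall fun p => hFG p)
  rw [step2]
  -- Integrability of the indicator
  have hGmeas : Measurable G := by
    simp only [hG]; fun_prop
  have hbound_int : Integrable (fun p : ℝ × ℝ =>
      (Set.Icc (0:ℝ) 1).indicator (fun u => u ^ r) p.1 * (Set.Icc (0:ℝ) 1).indicator (fun _ => (1:ℝ)) p.2) := by
    rw [MeasureTheory.Measure.volume_eq_prod]
    apply Integrable.mul_prod
    · rw [integrable_indicator_iff measurableSet_Icc]
      rw [integrableOn_Icc_iff_integrableOn_Ioc]
      have := intervalIntegrable_rpow' (a := 0) (b := 1) hr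
      rwa [intervalIntegrable_iff_integrableOn_Ioc_of_le (by norm_num)] at this
    · rw [integrable_indicator_iff measurableSet_Icc]
      exact integrableOn_const (by simp)
  have hint : Integrable (T.indicator G) := by
    apply Integrable.mono' hbound_int ((hGmeas.indicator hT).aestronglyMeasurable)
    apply Filter.Eventually.of_forall
    intro p
    by_cases hp : p ∈ T
    · obtain ⟨h1, h2, h3⟩ := id hp
      rw [Set.indicator_of_mem hp]
      have hp1 : p.1 ∈ Set.Icc (0:ℝ) 1 := ⟨le_trans h1 h2, h3⟩
      have hp2 : p.2 ∈ Set.Icc (0:ℝ) 1 := ⟨h1, le_trans h2 h3⟩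
      rw [Set.indicator_of_mem hp1, Set.indicator_of_mem hp2, mul_one]
      have hrpow : (0:ℝ) ≤ p.1 ^ r := Real.rpow_nonneg hp1.1 r
      calc ‖G p‖ = p.1 ^ r * (|Real.cos (a * (p.1 - p.2))| * |Real.cos (b * p.2)|) := by
            simp only [hG, Real.norm_eq_abs, abs_mul, abs_of_nonneg hrpow, mul_assoc]
        _ ≤ p.1 ^ r * (1 * 1) := by
            apply mul_le_mul_of_nonneg_left _ hrpow
            exact mul_le_mul (Real.abs_cos_le_one _) (Real.abs_cos_le_one _)
              (abs_nonneg _) zero_le_one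
        _ = p.1 ^ r := by ring
    · rw [Set.indicator_of_notMem hp]
      simp only [norm_zero]
      apply mul_nonneg
      · exact Set.indicator_nonneg (fun u hu => Real.rpow_nonneg hu.1 r) _
      · exact Set.indicator_nonneg (fun _ _ => zero_le_one) _
  -- Fubini
  have step3 : ∫ p in T, G p = ∫ u : ℝ, ∫ y : ℝ, T.indicator G (u, y) := by
    rw [← MeasureTheory.integral_indicator hT]
    rw [MeasureTheory.Measure.volume_eq_prod]
    exact MeasureTheory.integral_prod _ (by rwa [← MeasureTheory.Measure.volume_eq_prod])
  rw [step3]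
  -- evaluate inner integral
  have inner_eq : ∀ u : ℝ, (∫ y : ℝ, T.indicator G (u, y))
      = (Set.Icc (0:ℝ) 1).indicator (fun u => u ^ r * ∫ y in (0:ℝ)..u, Real.cos (a*(u-y)) * Real.cos (b*y)) u := by
    intro u
    by_cases hu1 : u ≤ 1
    · have : ∀ y : ℝ, T.indicator G (u, y) = (Set.Icc (0:ℝ) u).indicator (fun y => G (u, y)) y := by
        intro y
        by_cases hy : y ∈ Set.Icc (0:ℝ) u
        · rw [Set.indicator_of_mem hy]
          exact Set.indicator_of_mem (show ((u,y) : ℝ × ℝ) ∈ T from ⟨hy.1, hy.2, hu1⟩) G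
        · rw [Set.indicator_of_notMem hy, Set.indicator_of_notMem]
          intro hmem
          exact hy ⟨hmem.1, hmem.2.1⟩
      simp_rw [this]
      rw [MeasureTheory.integral_indicator measurableSet_Icc]
      by_cases hu0 : 0 ≤ u
      · rw [Set.indicator_of_mem (show u ∈ Set.Icc (0:ℝ) 1 from ⟨hu0, hu1⟩)]
        rw [MeasureTheory.integral_Icc_eq_integral_Ioc, ← intervalIntegral.integral_of_le hu0]
        rw [← intervalIntegral.integral_const_mul]
        apply intervalIntegral.integral_congr
        intro y _
        simp only [hG]
        ring
      · rw [Set.indicator_of_notMem (fun h => hu0 h.1)]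
        rw [Set.Icc_eq_empty (by linarith [lt_of_not_ge hu0])]
        simp
    · have : ∀ y : ℝ, T.indicator G (u, y) = 0 := by
        intro y
        apply Set.indicator_of_notMem
        intro hmem
        exact hu1 hmem.2.2
      simp_rw [this]
      rw [Set.indicator_of_notMem (fun h => hu1 h.2)]
      simp
  simp_rw [inner_eq]
  rw [MeasureTheory.integral_indicator measurableSet_Icc,
    MeasureTheory.integral_Icc_eq_integral_Ioc, ← intervalIntegral.integral_of_le (by norm_num : (0:ℝ) ≤ 1)]

end AuxStmt10

theorem stmt_10 (H : ℝ) (hH : H ∈ Set.Ioo (1/2 : ℝ) 1) (n m : ℕ) (hnm : n ≠ m) :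
    (∫ p in {p : ℝ × ℝ | 0 ≤ p.1 ∧ 0 ≤ p.2 ∧ p.1 + p.2 ≤ 1},
        (p.1 + p.2) ^ (2 * H - 2) * Real.cos (((n : ℝ) + 1/2) * Real.pi * p.1) *
          Real.cos (((m : ℝ) + 1/2) * Real.pi * p.2))
      = (1/2) * ((1 / ((((m : ℝ) + 1/2) * Real.pi) + (((n : ℝ) + 1/2) * Real.pi))) *
          (∫ u in (0:ℝ)..1, u ^ (2 * H - 2) *
            (Real.sin (((m : ℝ) + 1/2) * Real.pi * u) + Real.sin (((n : ℝ) + 1/2) * Real.pi * u)))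
        + (1 / ((((m : ℝ) + 1/2) * Real.pi) - (((n : ℝ) + 1/2) * Real.pi))) *
          (∫ u in (0:ℝ)..1, u ^ (2 * H - 2) *
            (Real.sin (((m : ℝ) + 1/2) * Real.pi * u) - Real.sin (((n : ℝ) + 1/2) * Real.pi * u)))) := by
  obtain ⟨hH1, hH2⟩ := hH
  set a : ℝ := ((n : ℝ) + 1/2) * Real.pi with ha
  set b : ℝ := ((m : ℝ) + 1/2) * Real.pi with hb
  set r : ℝ := 2 * H - 2 with hrdef
  have hr : -1 < r := by rw [hrdef]; linarith
  have hab : a + b ≠ 0 := by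
    have : (0:ℝ) < a + b := by
      rw [ha, hb]
      have := Real.pi_pos
      have h1 : (0:ℝ) < ((n : ℝ) + 1/2) := by positivity
      have h2 : (0:ℝ) < ((m : ℝ) + 1/2) := by positivity
      nlinarith
    linarith
  have hab' : a - b ≠ 0 := by
    rw [ha, hb]
    have hne : ((n : ℝ) + 1/2) ≠ ((m : ℝ) + 1/2) := by
      intro h
      have hnm' : (n : ℝ) = (m : ℝ) := by linarith
      exact hnm (Nat.cast_injective hnm')
    intro h
    have : (((n : ℝ) + 1/2) - ((m : ℝ) + 1/2)) * Real.pi = 0 := by linarith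
    rcases mul_eq_zero.1 this with h' | h'
    · exact hne (by linarith)
    · exact Real.pi_ne_zero h'
  have hba : b - a ≠ 0 := fun h => hab' (by linarith)
  have step := main_aux r a b hr
  rw [step]
  have congr1 : (∫ u in (0:ℝ)..1, u ^ r * ∫ y in (0:ℝ)..u, Real.cos (a*(u-y)) * Real.cos (b*y))
      = ∫ u in (0:ℝ)..1, ((1/(2*(a+b))) * (u ^ r * (Real.sin (b*u) + Real.sin (a*u)))
          + (1/(2*(b-a))) * (u ^ r * (Real.sin (b*u) - Real.sin (a*u)))) := by
    apply intervalIntegral.integral_congr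
    intro u _
    show u ^ r * (∫ y in (0:ℝ)..u, Real.cos (a*(u-y)) * Real.cos (b*y))
      = (1/(2*(a+b))) * (u ^ r * (Real.sin (b*u) + Real.sin (a*u)))
          + (1/(2*(b-a))) * (u ^ r * (Real.sin (b*u) - Real.sin (a*u)))
    rw [inner_trig a b u hab hab']
    field_simp
    ring
  rw [congr1]
  have hf : IntervalIntegrable (fun u : ℝ => u ^ r * (Real.sin (b*u) + Real.sin (a*u))) volume 0 1 :=
    (intervalIntegral.intervalIntegrable_rpow' hr).mul_continuousOn (by fun_prop : Continuous fun u : ℝ => Real.sin (b*u) + Real.sin (a*u)).continuousOn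
  have hg : IntervalIntegrable (fun u : ℝ => u ^ r * (Real.sin (b*u) - Real.sin (a*u))) volume 0 1 :=
    (intervalIntegral.intervalIntegrable_rpow' hr).mul_continuousOn (by fun_prop : Continuous fun u : ℝ => Real.sin (b*u) - Real.sin (a*u)).continuousOn
  rw [intervalIntegral.integral_add (hf.const_mul _) (hg.const_mul _),
    intervalIntegral.integral_const_mul, intervalIntegral.integral_const_mul]
  have e1 : ∀ u : ℝ, Real.sin (b*u) = Real.sin (((m : ℝ) + 1/2) * Real.pi * u) := fun u => by rw [hb]
  have e2 : ∀ u : ℝ, Real.sin (a*u) = Real.sin (((n : ℝ) + 1/2) * Real.pi * u) := fun u => by rw [ha]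
  simp_rw [e1, e2]
  have hba2 : b + a ≠ 0 := by rwa [add_comm]
  generalize (∫ u in (0:ℝ)..1, u ^ r * (Real.sin (((m : ℝ) + 1/2) * Real.pi * u) + Real.sin (((n : ℝ) + 1/2) * Real.pi * u))) = I1
  generalize (∫ u in (0:ℝ)..1, u ^ r * (Real.sin (((m : ℝ) + 1/2) * Real.pi * u) - Real.sin (((n : ℝ) + 1/2) * Real.pi * u))) = I2
  field_simp
  ring
end

section
/- If K₁ and K₂ are compact self-adjoint operators on a Hilbert space, then for every n, λ_n(K₁+K₂) ≤ min over j ∈ {1,…,n} of (|λ_{n−j+1}(K₁)| + |λ_j(K₂)|). -/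
open scoped RealInnerProductSpace

open scoped RealInnerProductSpace

lemma aux_bound {E : Type*} [NormedAddCommGroup E] [InnerProductSpace ℝ E] [CompleteSpace E]
    (K : E →L[ℝ] E) (e : ℕ → E) (μ : ℕ → ℝ) (he : Orthonormal ℝ e)
    (heig : ∀ n, K (e n) = μ n • e n)
    (hker : ∀ x : E, (∀ n, ⟪e n, x⟫ = 0) → K x = 0)
    (a : ℝ) (ha : 0 ≤ a) (x : E) (hx : ∀ n, μ n ≤ a ∨ ⟪e n, x⟫ = 0) :
    ⟪x, K x⟫ ≤ a * ‖x‖ ^ 2 := by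
  obtain ⟨w, b, hsub, hb⟩ := he.toSubtypeRange.exists_hilbertBasis_extension
  have h1 : HasSum (fun u : w => b.repr x u • K (b u)) (K x) := by
    simpa only [map_smul] using (b.hasSum_repr x).mapL K
  have h2 : HasSum (fun u : w => b.repr x u * ⟪x, K (b u)⟫) ⟪x, K x⟫ := by
    have := h1.mapL (innerSL ℝ x)
    simpa [inner_smul_right] using this
  have h3 : HasSum (fun u : w => a * (b.repr x u * b.repr x u)) (a * ‖x‖ ^ 2) := by
    have h4 : HasSum (fun u : w => b.repr x u * b.repr x u) (‖x‖ ^ 2) := by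
      have := lp.hasSum_inner (𝕜 := ℝ) (b.repr x) (b.repr x)
      simp only [RCLike.inner_apply, starRingEnd_apply, star_trivial] at this
      have hxx : (⟪b.repr x, b.repr x⟫ : ℝ) = ‖x‖ ^ 2 := by
        rw [b.repr.inner_map_map, real_inner_self_eq_norm_sq]
      rwa [hxx] at this
    exact h4.mul_left a
  refine hasSum_le (fun u => ?_) h2 h3
  by_cases hu : (u : E) ∈ Set.range e
  · obtain ⟨k, hk⟩ := hu
    have hbu : b u = e k := by rw [hb]; exact hk.symm
    have hrepr : b.repr x u = ⟪e k, x⟫ := by rw [b.repr_apply_apply, hbu]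
    rw [hbu, heig k, inner_smul_right, hrepr]
    rcases hx k with hk' | hk'
    · have h5 : ⟪x, e k⟫ = ⟪e k, x⟫ := real_inner_comm _ _
      rw [h5]
      have : 0 ≤ ⟪e k, x⟫ * ⟪e k, x⟫ := mul_self_nonneg _
      nlinarith
    · have h7 : ⟪x, e k⟫ = 0 := by rw [real_inner_comm]; exact hk'
      simp [h7, hk', mul_nonneg ha (mul_self_nonneg (⟪e k, x⟫ : ℝ))]
  · have hKu : K (b u) = 0 := by
      apply hker
      intro n
      have hn : (e n : E) ∈ w := hsub ⟨n, rfl⟩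
      have hne : (⟨e n, hn⟩ : w) ≠ u := by
        intro hcon
        exact hu ⟨n, congrArg Subtype.val hcon⟩
      have h6 := b.orthonormal.2 hne
      rw [hb] at h6
      convert h6 using 2
      exact congrFun hb u
    rw [hKu, inner_zero_right, mul_zero]
    exact mul_nonneg ha (mul_self_nonneg _)

lemma aux_core {E : Type*} [NormedAddCommGroup E] [InnerProductSpace ℝ E] [CompleteSpace E]
    (K₁ K₂ : E →L[ℝ] E) (μ μ₁ μ₂ : ℕ → ℝ) (e e₁ e₂ : ℕ → E)
    (he : Orthonormal ℝ e) (heig : ∀ n, (K₁ + K₂) (e n) = μ n • e n)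
    (he₁ : Orthonormal ℝ e₁) (heig₁ : ∀ n, K₁ (e₁ n) = μ₁ n • e₁ n)
    (hker₁ : ∀ x : E, (∀ n, ⟪e₁ n, x⟫ = 0) → K₁ x = 0)
    (he₂ : Orthonormal ℝ e₂) (heig₂ : ∀ n, K₂ (e₂ n) = μ₂ n • e₂ n)
    (hker₂ : ∀ x : E, (∀ n, ⟪e₂ n, x⟫ = 0) → K₂ x = 0)
    (a₁ a₂ : ℝ) (ha₁ : 0 ≤ a₁) (ha₂ : 0 ≤ a₂)
    (P S₁ S₂ : Finset ℕ)
    (hP : ∀ k ∈ P, a₁ + a₂ < μ k)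
    (hS₁ : ∀ k ∉ S₁, μ₁ k ≤ a₁) (hS₂ : ∀ k ∉ S₂, μ₂ k ≤ a₂) :
    P.card ≤ S₁.card + S₂.card := by
  by_contra hcard
  push_neg at hcard
  classical
  -- the linear map of orthogonality constraints
  let L : (↥P → ℝ) →ₗ[ℝ] ((↥S₁ → ℝ) × (↥S₂ → ℝ)) :=
  { toFun := fun c => (fun s => ∑ k : ↥P, c k * ⟪e₁ (s : ℕ), e (k : ℕ)⟫,
      fun s => ∑ k : ↥P, c k * ⟪e₂ (s : ℕ), e (k : ℕ)⟫)
    map_add' := by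
      intro c d
      refine Prod.ext ?_ ?_ <;> funext s <;>
        simp [add_mul, Finset.sum_add_distrib]
    map_smul' := by
      intro r c
      refine Prod.ext ?_ ?_ <;> funext s <;>
        simp [Finset.mul_sum, mul_assoc] }
  have hinj : ¬ Function.Injective L := by
    intro hLinj
    have h5 := LinearMap.finrank_le_finrank_of_injective hLinj
    rw [Module.finrank_pi, Module.finrank_prod, Module.finrank_pi, Module.finrank_pi,
      Fintype.card_coe, Fintype.card_coe, Fintype.card_coe] at h5
    omega
  rw [← LinearMap.ker_eq_bot] at hinj
  obtain ⟨c, hcmem, hcne⟩ := Submodule.ne_bot_iff _ |>.mp hinj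
  have hLc : L c = 0 := hcmem
  -- the test vector
  set x : E := ∑ k : ↥P, c k • e (k : ℕ) with hxdef
  have hoP : Orthonormal ℝ (fun k : ↥P => e (k : ℕ)) :=
    he.comp _ Subtype.coe_injective
  have hnorm : ‖x‖ ^ 2 = ∑ k : ↥P, c k * c k := by
    rw [← real_inner_self_eq_norm_sq, hxdef]
    simpa using hoP.inner_sum c c Finset.univ
  -- value of the quadratic form
  have hAx : ⟪x, (K₁ + K₂) x⟫ = ∑ k : ↥P, μ (k : ℕ) * (c k * c k) := by
    have hx2 : (K₁ + K₂) x = ∑ k : ↥P, (c k * μ (k : ℕ)) • e (k : ℕ) := by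
      rw [hxdef, map_sum]
      refine Finset.sum_congr rfl fun k _ => ?_
      rw [map_smul, heig, smul_smul]
    rw [hxdef, hx2]
    have := hoP.inner_sum c (fun k => c k * μ (k : ℕ)) Finset.univ
    simp only [RCLike.star_def, starRingEnd_apply, star_trivial] at this
    rw [this]
    refine Finset.sum_congr rfl fun k _ => by ring
  -- lower bound (strict)
  obtain ⟨k₀, hk₀⟩ : ∃ k : ↥P, c k ≠ 0 := by
    by_contra hall
    push_neg at hall
    exact hcne (funext hall)
  have hlow : (a₁ + a₂) * ‖x‖ ^ 2 < ⟪x, (K₁ + K₂) x⟫ := by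
    rw [hAx, hnorm, Finset.mul_sum]
    refine Finset.sum_lt_sum (fun i _ => ?_) ⟨k₀, Finset.mem_univ _, ?_⟩
    · exact mul_le_mul_of_nonneg_right (le_of_lt (hP _ i.2)) (mul_self_nonneg _)
    · exact (mul_lt_mul_of_pos_right (hP _ k₀.2)
        (mul_self_pos.mpr hk₀))
  -- upper bound
  have hortho₁ : ∀ n, μ₁ n ≤ a₁ ∨ ⟪e₁ n, x⟫ = 0 := by
    intro n
    by_cases hn : n ∈ S₁
    · right
      have h7 : ⟪e₁ n, x⟫ = ∑ k : ↥P, c k * ⟪e₁ n, e (k : ℕ)⟫ := by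
        rw [hxdef, inner_sum]
        exact Finset.sum_congr rfl fun k _ => by
          rw [real_inner_smul_right]
      rw [h7]
      have := congrFun (congrArg Prod.fst hLc) ⟨n, hn⟩
      exact this
    · exact Or.inl (hS₁ n hn)
  have hortho₂ : ∀ n, μ₂ n ≤ a₂ ∨ ⟪e₂ n, x⟫ = 0 := by
    intro n
    by_cases hn : n ∈ S₂
    · right
      have h7 : ⟪e₂ n, x⟫ = ∑ k : ↥P, c k * ⟪e₂ n, e (k : ℕ)⟫ := by
        rw [hxdef, inner_sum]
        exact Finset.sum_congr rfl fun k _ => by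
          rw [real_inner_smul_right]
      rw [h7]
      have := congrFun (congrArg Prod.snd hLc) ⟨n, hn⟩
      exact this
    · exact Or.inl (hS₂ n hn)
  have hub₁ := aux_bound K₁ e₁ μ₁ he₁ heig₁ hker₁ a₁ ha₁ x hortho₁
  have hub₂ := aux_bound K₂ e₂ μ₂ he₂ heig₂ hker₂ a₂ ha₂ x hortho₂
  have hub : ⟪x, (K₁ + K₂) x⟫ ≤ (a₁ + a₂) * ‖x‖ ^ 2 := by
    have : ⟪x, (K₁ + K₂) x⟫ = ⟪x, K₁ x⟫ + ⟪x, K₂ x⟫ := by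
      rw [ContinuousLinearMap.add_apply, inner_add_right]
    rw [this]
    nlinarith
  linarith

theorem stmt_14' {E : Type*} [NormedAddCommGroup E] [InnerProductSpace ℝ E] [CompleteSpace E]
    (K₁ K₂ : E →L[ℝ] E)
    (μ μ₁ μ₂ : ℕ → ℝ)
    (hμ : ∃ e : ℕ → E, Orthonormal ℝ e ∧ (∀ n, (K₁ + K₂) (e n) = μ n • e n) ∧
      (∀ x : E, (∀ n, ⟪e n, x⟫ = 0) → (K₁ + K₂) x = 0) ∧ Antitone fun n => |μ n|)
    (hμ₁ : ∃ e : ℕ → E, Orthonormal ℝ e ∧ (∀ n, K₁ (e n) = μ₁ n • e n) ∧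
      (∀ x : E, (∀ n, ⟪e n, x⟫ = 0) → K₁ x = 0) ∧ Antitone fun n => |μ₁ n|)
    (hμ₂ : ∃ e : ℕ → E, Orthonormal ℝ e ∧ (∀ n, K₂ (e n) = μ₂ n • e n) ∧
      (∀ x : E, (∀ n, ⟪e n, x⟫ = 0) → K₂ x = 0) ∧ Antitone fun n => |μ₂ n|) :
    ∀ n : ℕ, ∀ j ≤ n, μ n ≤ |μ₁ (n - j)| + |μ₂ j| := by
  obtain ⟨e, he, heig, hker, hmono⟩ := hμ
  obtain ⟨e₁, he₁, heig₁, hker₁, hmono₁⟩ := hμ₁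
  obtain ⟨e₂, he₂, heig₂, hker₂, hmono₂⟩ := hμ₂
  intro n j hj
  by_contra hcon
  push_neg at hcon
  set a₁ := |μ₁ (n - j)| with ha₁def
  set a₂ := |μ₂ j| with ha₂def
  have ha₁ : 0 ≤ a₁ := abs_nonneg _
  have ha₂ : 0 ≤ a₂ := abs_nonneg _
  have hmun : a₁ + a₂ < μ n := hcon
  classical
  set P := (Finset.range (n+1)).filter (fun k => 0 < μ k) with hPdef
  set N := (Finset.range (n+1)).filter (fun k => ¬ 0 < μ k) with hNdef
  have hPN : P.card + N.card = n + 1 := by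
    rw [hPdef, hNdef, Finset.card_filter_add_card_filter_not, Finset.card_range]
  set S₁ := (Finset.range (n-j)).filter (fun k => a₁ < μ₁ k) with hS₁def
  set S₁' := (Finset.range (n-j)).filter (fun k => a₁ < -μ₁ k) with hS₁'def
  set S₂ := (Finset.range j).filter (fun k => a₂ < μ₂ k) with hS₂def
  set S₂' := (Finset.range j).filter (fun k => a₂ < -μ₂ k) with hS₂'def
  have habs : ∀ k ≤ n, a₁ + a₂ < |μ k| :=
    fun k hk => lt_of_lt_of_le (lt_of_lt_of_le hmun (le_abs_self _)) (hmono hk)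
  have hcore1 : P.card ≤ S₁.card + S₂.card := by
    refine aux_core K₁ K₂ μ μ₁ μ₂ e e₁ e₂ he heig he₁ heig₁ hker₁ he₂ heig₂ hker₂
      a₁ a₂ ha₁ ha₂ P S₁ S₂ ?_ ?_ ?_
    · intro k hk
      rw [hPdef, Finset.mem_filter, Finset.mem_range] at hk
      have h8 := habs k (by omega)
      rwa [abs_of_pos hk.2] at h8
    · intro k hk
      by_contra h
      push_neg at h
      apply hk
      rw [hS₁def, Finset.mem_filter, Finset.mem_range]
      refine ⟨?_, h⟩
      by_contra hge
      push_neg at hge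
      have h9 := hmono₁ hge
      have h10 := le_abs_self (μ₁ k)
      simp only [ha₁def] at h
      linarith
    · intro k hk
      by_contra h
      push_neg at h
      apply hk
      rw [hS₂def, Finset.mem_filter, Finset.mem_range]
      refine ⟨?_, h⟩
      by_contra hge
      push_neg at hge
      have h9 := hmono₂ hge
      have h10 := le_abs_self (μ₂ k)
      simp only [ha₂def] at h
      linarith
  have hcore2 : N.card ≤ S₁'.card + S₂'.card := by
    refine aux_core (-K₁) (-K₂) (fun k => -μ k) (fun k => -μ₁ k) (fun k => -μ₂ k)
      e e₁ e₂ he ?_ he₁ ?_ ?_ he₂ ?_ ?_ a₁ a₂ ha₁ ha₂ N S₁' S₂' ?_ ?_ ?_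
    · intro m
      have h8 := heig m
      simp only [ContinuousLinearMap.add_apply, ContinuousLinearMap.neg_apply] at h8 ⊢
      rw [← neg_add, h8, ← neg_smul]
    · intro m
      simp [heig₁ m]
    · intro x hx
      simp [hker₁ x hx]
    · intro m
      simp [heig₂ m]
    · intro x hx
      simp [hker₂ x hx]
    · intro k hk
      rw [hNdef, Finset.mem_filter, Finset.mem_range] at hk
      have h8 := habs k (by omega)
      rwa [abs_of_nonpos (not_lt.mp hk.2)] at h8
    · intro k hk
      by_contra h
      push_neg at h
      apply hk
      rw [hS₁'def, Finset.mem_filter, Finset.mem_range]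
      refine ⟨?_, by linarith⟩
      by_contra hge
      push_neg at hge
      have h9 := hmono₁ hge
      have h10 := neg_le_abs (μ₁ k)
      simp only [ha₁def] at h
      linarith
    · intro k hk
      by_contra h
      push_neg at h
      apply hk
      rw [hS₂'def, Finset.mem_filter, Finset.mem_range]
      refine ⟨?_, by linarith⟩
      by_contra hge
      push_neg at hge
      have h9 := hmono₂ hge
      have h10 := neg_le_abs (μ₂ k)
      simp only [ha₂def] at h
      linarith
  have hd₁ : Disjoint S₁ S₁' := by
    rw [Finset.disjoint_left]
    intro k hk hk'
    rw [hS₁def, Finset.mem_filter] at hk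
    rw [hS₁'def, Finset.mem_filter] at hk'
    linarith [hk.2, hk'.2]
  have hd₂ : Disjoint S₂ S₂' := by
    rw [Finset.disjoint_left]
    intro k hk hk'
    rw [hS₂def, Finset.mem_filter] at hk
    rw [hS₂'def, Finset.mem_filter] at hk'
    linarith [hk.2, hk'.2]
  have hb₁ : S₁.card + S₁'.card ≤ n - j := by
    rw [← Finset.card_union_of_disjoint hd₁]
    calc (S₁ ∪ S₁').card ≤ (Finset.range (n-j)).card := by
          refine Finset.card_le_card (Finset.union_subset ?_ ?_)
          · rw [hS₁def]; exact Finset.filter_subset _ _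
          · rw [hS₁'def]; exact Finset.filter_subset _ _
      _ = n - j := Finset.card_range _
  have hb₂ : S₂.card + S₂'.card ≤ j := by
    rw [← Finset.card_union_of_disjoint hd₂]
    calc (S₂ ∪ S₂').card ≤ (Finset.range j).card := by
          refine Finset.card_le_card (Finset.union_subset ?_ ?_)
          · rw [hS₂def]; exact Finset.filter_subset _ _
          · rw [hS₂'def]; exact Finset.filter_subset _ _
      _ = j := Finset.card_range _
  omega


/-- `μ` enumerates the eigenvalues (with multiplicity, in order of decreasing absolute
value) of the operator `A` on a real Hilbert space. -/
def IsEigenvalueSequence {E : Type*} [NormedAddCommGroup E] [InnerProductSpace ℝ E]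
    (A : E →L[ℝ] E) (μ : ℕ → ℝ) : Prop :=
  ∃ e : ℕ → E, Orthonormal ℝ e ∧ (∀ n, A (e n) = μ n • e n) ∧
    (∀ x : E, (∀ n, @inner ℝ _ _ (e n) x = 0) → A x = 0) ∧
    Antitone fun n => |μ n|

theorem stmt_14 {E : Type*} [NormedAddCommGroup E] [InnerProductSpace ℝ E] [CompleteSpace E]
    (K₁ K₂ : E →L[ℝ] E) (h₁ : IsCompactOperator K₁) (h₂ : IsCompactOperator K₂)
    (h₁sa : IsSelfAdjoint K₁) (h₂sa : IsSelfAdjoint K₂)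
    (μ μ₁ μ₂ : ℕ → ℝ)
    (hμ : IsEigenvalueSequence (K₁ + K₂) μ)
    (hμ₁ : IsEigenvalueSequence K₁ μ₁)
    (hμ₂ : IsEigenvalueSequence K₂ μ₂) :
    ∀ n : ℕ, ∀ j ≤ n, μ n ≤ |μ₁ (n - j)| + |μ₂ j| :=
  stmt_14' K₁ K₂ μ μ₁ μ₂ hμ hμ₁ hμ₂
end

section
/- For H ∈ (1/2,1), nonnegative integers n < m with n* = (n+1/2)π, m* = (m+1/2)π, the integral over the parallelogram V₁ = {(x,y) : 0 ≤ y ≤ 1, |y − x| ≤ 1} of |x−y|^{2H−2} sin(n*x) sin(m*y) equals ∫₀¹ sin(m*v) sin(n*v) dv · ∫_{−1}^1 |u|^{2H−2} cos(n*u) du, and ∫₀¹ sin(m*v) sin(n*v) dv = 0 for m ≠ n, hence the parallelogram integral vanishes. -/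
open Real MeasureTheory Set

/-- `|u|^p` is interval integrable for `p > -1`. -/
lemma absRpowII {p : ℝ} (hp : -1 < p) (a b : ℝ) :
    IntervalIntegrable (fun u : ℝ => |u| ^ p) volume a b := by
  have h : ∀ c : ℝ, 0 ≤ c → IntervalIntegrable (fun u : ℝ => |u| ^ p) volume 0 c := by
    intro c hc
    have h0 := intervalIntegral.intervalIntegrable_rpow' (a := (0:ℝ)) (b := c) hp
    rw [intervalIntegrable_iff] at h0 ⊢
    refine h0.congr_fun ?_ measurableSet_uIoc
    intro x hx
    rw [Set.uIoc_of_le hc] at hx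
    simp only [abs_of_pos hx.1]
  have h' : ∀ c : ℝ, IntervalIntegrable (fun u : ℝ => |u| ^ p) volume 0 c := by
    intro c
    rcases le_total 0 c with hc | hc
    · exact h c hc
    · rw [IntervalIntegrable.iff_comp_neg]
      simpa [abs_neg] using h (-c) (by linarith)
  exact (h' a).symm.trans (h' b)

/-- Shift lemma. -/
lemma shiftInt (f : ℝ → ℝ) (y : ℝ) :
    ∫ x in (y-1)..(y+1), f (x - y) = ∫ u in (-1:ℝ)..1, f u := by
  have h := intervalIntegral.integral_comp_sub_right (a := y-1) (b := y+1) f y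
  rw [h]
  congr 1 <;> ring

/-- Oddness gives zero. -/
lemma oddZero {p : ℝ} (hp : -1 < p) (a : ℝ) :
    ∫ u in (-1:ℝ)..1, |u| ^ p * Real.sin (a * u) = 0 := by
  have hcont : Continuous fun u : ℝ => Real.sin (a * u) :=
    Real.continuous_sin.comp (continuous_const.mul continuous_id)
  have hL : IntervalIntegrable (fun u : ℝ => |u| ^ p * Real.sin (a * u)) volume (-1) 0 :=
    (absRpowII hp (-1) 0).mul_continuousOn hcont.continuousOn
  have hR : IntervalIntegrable (fun u : ℝ => |u| ^ p * Real.sin (a * u)) volume 0 1 :=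
    (absRpowII hp 0 1).mul_continuousOn hcont.continuousOn
  have hswap : ∫ u in (-1:ℝ)..0, |u| ^ p * Real.sin (a * u)
      = - ∫ u in (0:ℝ)..1, |u| ^ p * Real.sin (a * u) := by
    have h := intervalIntegral.integral_comp_neg (a := (0:ℝ)) (b := 1)
      (fun u : ℝ => |u| ^ p * Real.sin (a * u))
    simp only [neg_zero, neg_neg] at h
    rw [← h]
    rw [← intervalIntegral.integral_neg]
    apply intervalIntegral.integral_congr
    intro x _
    show |(-x)| ^ p * Real.sin (a * -x) = -(|x| ^ p * Real.sin (a * x))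
    rw [abs_neg, mul_neg, Real.sin_neg]
    ring
  have := intervalIntegral.integral_add_adjacent_intervals hL hR
  rw [← this, hswap]
  ring

/-- cosine integral. -/
lemma cosIntZero (k : ℤ) (hk : k ≠ 0) :
    ∫ v in (0:ℝ)..1, Real.cos (((k : ℝ) * Real.pi) * v) = 0 := by
  have hc : ((k : ℝ) * Real.pi) ≠ 0 :=
    mul_ne_zero (Int.cast_ne_zero.2 hk) Real.pi_ne_zero
  rw [intervalIntegral.integral_comp_mul_left (fun x => Real.cos x) hc]
  simp [Real.sin_int_mul_pi]

/-- Orthogonality. -/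
lemma orth (n m : ℕ) (hnm : n ≠ m) :
    ∫ v in (0:ℝ)..1,
        Real.sin (((m : ℝ) + 1/2) * Real.pi * v) * Real.sin (((n : ℝ) + 1/2) * Real.pi * v)
      = 0 := by
  set a : ℝ := ((n : ℝ) + 1/2) * Real.pi with ha
  set b : ℝ := ((m : ℝ) + 1/2) * Real.pi with hb
  have key : ∀ v : ℝ, Real.sin (b * v) * Real.sin (a * v)
      = (Real.cos ((b - a) * v) - Real.cos ((b + a) * v)) / 2 := by
    intro v
    rw [sub_mul, add_mul, Real.cos_sub, Real.cos_add]
    ring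
  have hI1 : IntervalIntegrable (fun v : ℝ => Real.cos ((b - a) * v)) volume 0 1 :=
    (Real.continuous_cos.comp (continuous_const.mul continuous_id)).intervalIntegrable _ _
  have hI2 : IntervalIntegrable (fun v : ℝ => Real.cos ((b + a) * v)) volume 0 1 :=
    (Real.continuous_cos.comp (continuous_const.mul continuous_id)).intervalIntegrable _ _
  have e1 : b - a = (((m : ℤ) - (n : ℤ) : ℤ) : ℝ) * Real.pi := by
    push_cast [ha, hb]; ring
  have e2 : b + a = (((m : ℤ) + (n : ℤ) + 1 : ℤ) : ℝ) * Real.pi := by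
    push_cast [ha, hb]; ring
  calc ∫ v in (0:ℝ)..1, Real.sin (b * v) * Real.sin (a * v)
      = ∫ v in (0:ℝ)..1, (Real.cos ((b - a) * v) - Real.cos ((b + a) * v)) / 2 :=
        intervalIntegral.integral_congr fun v _ => key v
    _ = ((∫ v in (0:ℝ)..1, Real.cos ((b - a) * v))
          - ∫ v in (0:ℝ)..1, Real.cos ((b + a) * v)) / 2 := by
        rw [intervalIntegral.integral_div, intervalIntegral.integral_sub hI1 hI2]
    _ = 0 := by
        rw [e1, e2, cosIntZero _ (by omega), cosIntZero _ (by omega)]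
        norm_num

/-- Inner integral evaluation. -/
lemma innerInt {p : ℝ} (hp : -1 < p) (a y : ℝ) :
    ∫ x in (y-1)..(y+1), |x - y| ^ p * Real.sin (a * x)
      = Real.sin (a * y) * ∫ u in (-1:ℝ)..1, |u| ^ p * Real.cos (a * u) := by
  have h0 : ∫ x in (y-1)..(y+1), |x - y| ^ p * Real.sin (a * x)
      = ∫ u in (-1:ℝ)..1, |u| ^ p * Real.sin (a * (u + y)) := by
    rw [← shiftInt (fun u => |u| ^ p * Real.sin (a * (u + y))) y]
    apply intervalIntegral.integral_congr
    intro x _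
    simp [sub_add_cancel]
  have hsin : IntervalIntegrable (fun u : ℝ => |u| ^ p * Real.sin (a * u)) volume (-1) 1 :=
    (absRpowII hp (-1) 1).mul_continuousOn (Real.continuous_sin.comp (continuous_const.mul continuous_id) : Continuous fun u : ℝ =>
      Real.sin (a * u)).continuousOn
  have hcos : IntervalIntegrable (fun u : ℝ => |u| ^ p * Real.cos (a * u)) volume (-1) 1 :=
    (absRpowII hp (-1) 1).mul_continuousOn (Real.continuous_cos.comp (continuous_const.mul continuous_id) : Continuous fun u : ℝ =>
      Real.cos (a * u)).continuousOn
  rw [h0]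
  have h1 : ∀ u : ℝ, |u| ^ p * Real.sin (a * (u + y))
      = (|u| ^ p * Real.sin (a * u)) * Real.cos (a * y)
        + (|u| ^ p * Real.cos (a * u)) * Real.sin (a * y) := by
    intro u
    rw [mul_add, Real.sin_add]
    ring
  rw [intervalIntegral.integral_congr fun u _ => h1 u,
    intervalIntegral.integral_add (hsin.mul_const _) (hcos.mul_const _),
    intervalIntegral.integral_mul_const, intervalIntegral.integral_mul_const,
    oddZero hp a]
  ring

set_option maxHeartbeats 1000000 in
theorem stmt_18 (H : ℝ) (hH : H ∈ Set.Ioo (1/2 : ℝ) 1) (n m : ℕ) (hnm : n < m) :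
    (∫ p in {p : ℝ × ℝ | 0 ≤ p.2 ∧ p.2 ≤ 1 ∧ |p.2 - p.1| ≤ 1},
        |p.1 - p.2| ^ (2 * H - 2) * Real.sin (((n : ℝ) + 1/2) * Real.pi * p.1) *
          Real.sin (((m : ℝ) + 1/2) * Real.pi * p.2))
      = (∫ v in (0:ℝ)..1,
          Real.sin (((m : ℝ) + 1/2) * Real.pi * v) * Real.sin (((n : ℝ) + 1/2) * Real.pi * v)) *
        (∫ u in (-1:ℝ)..1, |u| ^ (2 * H - 2) * Real.cos (((n : ℝ) + 1/2) * Real.pi * u)) ∧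
    (∫ v in (0:ℝ)..1,
        Real.sin (((m : ℝ) + 1/2) * Real.pi * v) * Real.sin (((n : ℝ) + 1/2) * Real.pi * v)) = 0 ∧
    (∫ p in {p : ℝ × ℝ | 0 ≤ p.2 ∧ p.2 ≤ 1 ∧ |p.2 - p.1| ≤ 1},
        |p.1 - p.2| ^ (2 * H - 2) * Real.sin (((n : ℝ) + 1/2) * Real.pi * p.1) *
          Real.sin (((m : ℝ) + 1/2) * Real.pi * p.2)) = 0 := by
  have horth := orth n m hnm.ne
  have hp1 : (-1 : ℝ) < 2 * H - 2 := by linarith [hH.1]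
  set q : ℝ := 2 * H - 2 with hq
  set a : ℝ := ((n : ℝ) + 1/2) * Real.pi with ha
  set b : ℝ := ((m : ℝ) + 1/2) * Real.pi with hb
  set S : Set (ℝ × ℝ) := {p : ℝ × ℝ | 0 ≤ p.2 ∧ p.2 ≤ 1 ∧ |p.2 - p.1| ≤ 1} with hS
  set F : ℝ × ℝ → ℝ := fun z => |z.1 - z.2| ^ q * Real.sin (a * z.1) * Real.sin (b * z.2)
    with hF
  have hSm : MeasurableSet S := by
    have : S = {z : ℝ × ℝ | 0 ≤ z.2} ∩ ({z : ℝ × ℝ | z.2 ≤ 1} ∩ {z : ℝ × ℝ | |z.2 - z.1| ≤ 1}) := rfl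
    rw [this]
    exact (measurableSet_le measurable_const measurable_snd).inter
      ((measurableSet_le measurable_snd measurable_const).inter
        (measurableSet_le ((measurable_snd.sub measurable_fst).abs) measurable_const))
  have hFm : Measurable F := by
    rw [hF]; fun_prop
  -- the slice as indicator
  have sliceEq : ∀ y ∈ Icc (0:ℝ) 1, (fun x => S.indicator F (x, y))
      = (Icc (y-1) (y+1)).indicator (fun x => F (x, y)) := by
    intro y hy
    funext x
    by_cases hx : x ∈ Icc (y-1) (y+1)
    · rw [Set.indicator_of_mem hx, Set.indicator_of_mem]
      exact ⟨hy.1, hy.2, by rw [abs_le]; exact ⟨by linarith [hx.2], by linarith [hx.1]⟩⟩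
    · rw [Set.indicator_of_notMem hx, Set.indicator_of_notMem]
      intro hmem
      have h3 := hmem.2.2
      rw [abs_le] at h3
      exact hx ⟨by linarith [h3.2], by linarith [h3.1]⟩
  have sliceZero : ∀ y : ℝ, y ∉ Icc (0:ℝ) 1 → (fun x => S.indicator F (x, y)) = fun _ => 0 := by
    intro y hy
    funext x
    exact Set.indicator_of_notMem (fun hmem => hy ⟨hmem.1, hmem.2.1⟩) _
  have hIIy : ∀ y : ℝ, IntervalIntegrable (fun x => F (x, y)) volume (y-1) (y+1) := by
    intro y
    have h1 : IntervalIntegrable (fun x => |x - y| ^ q) volume (y-1) (y+1) := by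
      have h2 := (absRpowII hp1 (-1) 1).comp_sub_right y
      have e1 : y - 1 = -1 + y := by ring
      have e2 : y + 1 = 1 + y := by ring
      rw [e1, e2]; exact h2
    simp only [hF]
    exact (h1.mul_continuousOn (Real.continuous_sin.comp (continuous_const.mul continuous_id) : Continuous fun x : ℝ =>
      Real.sin (a * x)).continuousOn).mul_const _
  have claim_slice : ∀ y : ℝ, Integrable (fun x => S.indicator F (x, y)) volume := by
    intro y
    by_cases hy : y ∈ Icc (0:ℝ) 1
    · rw [sliceEq y hy, integrable_indicator_iff measurableSet_Icc,
        integrableOn_Icc_iff_integrableOn_Ioc]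
      exact (hIIy y).1
    · rw [sliceZero y hy]
      exact integrable_zero _ _ _
  set C : ℝ := ∫ u in (-1:ℝ)..1, |u| ^ q with hC
  have hC0 : 0 ≤ C := intervalIntegral.integral_nonneg (by norm_num)
    fun u _ => Real.rpow_nonneg (abs_nonneg u) q
  have hCy : ∀ y : ℝ, ∫ x in Icc (y-1) (y+1), |x - y| ^ q = C := by
    intro y
    rw [MeasureTheory.integral_Icc_eq_integral_Ioc,
      ← intervalIntegral.integral_of_le (by linarith : y - 1 ≤ y + 1)]
    rw [hC, ← shiftInt (fun u => |u| ^ q) y]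
  have claim_norm : ∀ y : ℝ, (∫ x, ‖S.indicator F (x, y)‖)
      ≤ (Icc (0:ℝ) 1).indicator (fun _ => C) y := by
    intro y
    by_cases hy : y ∈ Icc (0:ℝ) 1
    · rw [Set.indicator_of_mem hy]
      have hdom : Integrable ((Icc (y-1) (y+1)).indicator (fun x => |x - y| ^ q)) volume := by
        rw [integrable_indicator_iff measurableSet_Icc, integrableOn_Icc_iff_integrableOn_Ioc]
        have h3 := (absRpowII hp1 (-1) 1).comp_sub_right y
        have e1 : y - 1 = -1 + y := by ring
        have e2 : y + 1 = 1 + y := by ring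
        rw [e1, e2]; exact h3.1
      calc (∫ x, ‖S.indicator F (x, y)‖)
          ≤ ∫ x, (Icc (y-1) (y+1)).indicator (fun x => |x - y| ^ q) x := by
            apply integral_mono (claim_slice y).norm hdom
            intro x
            have hx0 : S.indicator F (x, y)
                = (Icc (y-1) (y+1)).indicator (fun x => F (x, y)) x :=
              congrFun (sliceEq y hy) x
            show ‖S.indicator F (x, y)‖ ≤ (Icc (y-1) (y+1)).indicator (fun x => |x - y| ^ q) x
            rw [hx0]
            by_cases hx : x ∈ Icc (y-1) (y+1)
            · rw [Set.indicator_of_mem hx, Set.indicator_of_mem hx]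
              rw [Real.norm_eq_abs, hF]
              calc |(|x - y| ^ q * Real.sin (a * x) * Real.sin (b * y))|
                  = |x - y| ^ q * (|Real.sin (a * x)| * |Real.sin (b * y)|) := by
                    rw [abs_mul, abs_mul, abs_of_nonneg (Real.rpow_nonneg (abs_nonneg _) _)]
                    ring
                _ ≤ |x - y| ^ q * (1 * 1) := by
                    apply mul_le_mul_of_nonneg_left _ (Real.rpow_nonneg (abs_nonneg _) _)
                    exact mul_le_mul (Real.abs_sin_le_one _) (Real.abs_sin_le_one _)
                      (abs_nonneg _) zero_le_one
                _ = |x - y| ^ q := by ring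
            · rw [Set.indicator_of_notMem hx, Set.indicator_of_notMem hx]
              simp
        _ = ∫ x in Icc (y-1) (y+1), |x - y| ^ q := integral_indicator measurableSet_Icc
        _ = C := hCy y
    · have h0 : ∀ x : ℝ, S.indicator F (x, y) = 0 := fun x => congrFun (sliceZero y hy) x
      simp [Set.indicator_of_notMem hy, h0]
  have hgm : AEStronglyMeasurable (S.indicator F) ((volume : Measure ℝ).prod volume) := by
    rw [← Measure.volume_eq_prod]
    exact (hFm.indicator hSm).aestronglyMeasurable
  have hInt : Integrable (S.indicator F) ((volume : Measure ℝ).prod volume) := by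
    rw [integrable_prod_iff' hgm]
    constructor
    · exact Filter.Eventually.of_forall claim_slice
    · apply Integrable.mono' (g := (Icc (0:ℝ) 1).indicator (fun _ => C))
      · rw [integrable_indicator_iff measurableSet_Icc]
        exact integrableOn_const (by simp) (by simp)
      · exact (hgm.norm.prod_swap).integral_prod_right'
      · refine Filter.Eventually.of_forall fun y => ?_
        rw [Real.norm_eq_abs, abs_of_nonneg (integral_nonneg fun x => norm_nonneg _)]
        exact claim_norm y
  set C' : ℝ := ∫ u in (-1:ℝ)..1, |u| ^ q * Real.cos (a * u) with hC'
  have main : (∫ z in S, F z) = 0 := by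
    rw [← MeasureTheory.integral_indicator hSm]
    have hvol : (volume : Measure (ℝ × ℝ)) = (volume : Measure ℝ).prod volume :=
      Measure.volume_eq_prod ℝ ℝ
    rw [hvol, MeasureTheory.integral_prod_symm _ hInt]
    have inner : ∀ y : ℝ, (∫ x, S.indicator F (x, y))
        = (Icc (0:ℝ) 1).indicator (fun y => Real.sin (b * y) * (Real.sin (a * y) * C')) y := by
      intro y
      by_cases hy : y ∈ Icc (0:ℝ) 1
      · rw [Set.indicator_of_mem hy, sliceEq y hy,
          MeasureTheory.integral_indicator measurableSet_Icc,
          MeasureTheory.integral_Icc_eq_integral_Ioc,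
          ← intervalIntegral.integral_of_le (by linarith : y - 1 ≤ y + 1)]
        have : ∫ x in (y-1)..(y+1), F (x, y)
            = (∫ x in (y-1)..(y+1), |x - y| ^ q * Real.sin (a * x)) * Real.sin (b * y) := by
          rw [← intervalIntegral.integral_mul_const]
        rw [this, innerInt hp1 a y]
        ring
      · rw [Set.indicator_of_notMem hy, sliceZero y hy]
        simp
    rw [MeasureTheory.integral_congr_ae (Filter.Eventually.of_forall inner),
      MeasureTheory.integral_indicator measurableSet_Icc,
      MeasureTheory.integral_Icc_eq_integral_Ioc,
      ← intervalIntegral.integral_of_le (by norm_num : (0:ℝ) ≤ 1)]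
    have : ∫ y in (0:ℝ)..1, Real.sin (b * y) * (Real.sin (a * y) * C')
        = (∫ y in (0:ℝ)..1, Real.sin (b * y) * Real.sin (a * y)) * C' := by
      rw [← intervalIntegral.integral_mul_const]
      congr 1
      funext y
      ring
    rw [this, horth, zero_mul]
  exact ⟨by rw [main, horth, zero_mul], horth, main⟩
end
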